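/- arXiv:1108.5568 — 2 statements merged into one kernel-verified Lean document; each statement's English description precedes it below -/
import Mathlib

section
/- Fix n₀ ≥ 2 such that γ₀ := c²γ^{n₀} < 1. Let L > 0 and, for arbitrary k, n ≥ 1, let g_{n,k}: E^{2(k+n)} → ℝ be Lipschitz continuous in each variable with the same Lipschitz constant L. Define H_{n,k}(x) = ∫_E π_1(x, dy_1) ∫_E π_2(y_1, dy_2) ⋯ ∫_E π_{2(k+n)}(y_{2(k+n)−1}, dy_{2(k+n)}) g_{n,k}(y_1,…,y_{2(k+n)}), where π_l(y_{l−1}, ·) = δ_{y_{l−1}} P^{k_l} with k_l ≥ 1 for all l and additionally k_l ≥ n₀ − 1 for all even l. Then H_{n,k} is Lipschitz with Lipschitz constant at most L(cγ+1)/(1−γ₀); in particular the constant depends only on L (and on c, γ, n₀), not on n, k, or the exponents k_l. -/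
open MeasureTheory ProbabilityTheory Filter Bornology
open scoped ENNReal NNReal Topology
set_option linter.unusedSectionVars false
set_option maxHeartbeats 1000000



variable {E : Type*} [MeasurableSpace E] [MetricSpace E] [CompleteSpace E]
  [SecondCountableTopology E] [BorelSpace E]

/-- The Markov operator acting on functions: `Pf(x) = ∫ f(y) π(x, dy)`. -/
noncomputable def Pfun (π : Kernel E E) (f : E → ℝ) : E → ℝ := fun x => ∫ y, f y ∂(π x)

/-- The Markov operator acting on measures (the transfer operator `ν ↦ νP`). -/
noncomputable def Pmeas (π : Kernel E E) (ν : MeasureTheory.Measure E) :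
    MeasureTheory.Measure E := ν.bind (fun x => π x)

/-- `ν ∈ M_{1,1}`: a Borel probability measure with finite first moment. -/
def FiniteFirstMoment (ν : MeasureTheory.Measure E) : Prop :=
  IsProbabilityMeasure ν ∧ ∃ x₀ : E, Integrable (fun x => dist x₀ x) ν

/-- The Wasserstein (dual-Lipschitz) distance between two measures. -/
noncomputable def wassDist (ν₁ ν₂ : MeasureTheory.Measure E) : ℝ :=
  sSup {r : ℝ | ∃ f : E → ℝ, LipschitzWith 1 f ∧ r = |∫ x, f x ∂ν₁ - ∫ x, f x ∂ν₂|}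

/-- The natural filtration of the coordinate process on `ℕ → E`. -/
def natFilt : Filtration ℕ (MeasurableSpace.pi : MeasurableSpace (ℕ → E)) :=
  Filtration.natural (fun k (ω : ℕ → E) => ω k)
    (fun k => (measurable_pi_apply k).stronglyMeasurable)

/-- `ℙ` is the law of the Markov chain on `E^ℕ` with transition probability `π` and
initial distribution `ν`. -/
structure IsMarkovChainLaw (π : Kernel E E) (ν : MeasureTheory.Measure E)
    (P : MeasureTheory.Measure (ℕ → E)) : Prop where
  prob : IsProbabilityMeasure P
  init : P.map (fun ω => ω 0) = ν
  markov : ∀ (n : ℕ) (g : E → ℝ), Measurable g → IsBounded (Set.range g) →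
    P[(fun ω => g (ω (n + 1))) | natFilt n] =ᵐ[P] fun ω => ∫ y, g y ∂(π (ω n))

/-- The corrector function `χ = ∑_{i≥0} Pⁱψ`. -/
noncomputable def chiFun (π : Kernel E E) (ψ : E → ℝ) : E → ℝ :=
  fun x => ∑' i : ℕ, (Pfun π)^[i] ψ x

/-- The martingale `S_n = χ(X_n) - χ(X_0) + ∑_{i=0}^n ψ(X_i)` as a function of the trajectory. -/
noncomputable def SFun (π : Kernel E E) (ψ : E → ℝ) (n : ℕ) : (ℕ → E) → ℝ :=
  fun ω => chiFun π ψ (ω n) - chiFun π ψ (ω 0) + ∑ i ∈ Finset.range (n + 1), ψ (ω i)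

/-- The martingale differences `Z_n = χ(X_n) - χ(X_{n-1}) + ψ(X_n)`. -/
noncomputable def ZFun (π : Kernel E E) (ψ : E → ℝ) (n : ℕ) : (ℕ → E) → ℝ :=
  fun ω => chiFun π ψ (ω n) - chiFun π ψ (ω (n - 1)) + ψ (ω n)

/-- The `k`-fold composition `P^k` of the transition kernel (with `P^0 = id`). -/
noncomputable def kpow (π : Kernel E E) : ℕ → Kernel E E
  | 0 => Kernel.id
  | n + 1 => (kpow π n) ∘ₖ π

/-- The iterated integral `∫ κ₀(x, dy₁) ∫ κ₁(y₁, dy₂) ⋯ ∫ κ_{m-1}(y_{m-1}, dy_m) g(y₁,…,y_m)`. -/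
noncomputable def iterIntegral (κ : ℕ → Kernel E E) :
    (m : ℕ) → ((Fin m → E) → ℝ) → E → ℝ
  | 0, g, _ => g Fin.elim0
  | m + 1, g, x =>
      ∫ y, iterIntegral (fun j => κ (j + 1)) m (fun ys => g (Fin.cons y ys)) y ∂(κ 0 x)

lemma ffm_dirac (x : E) : FiniteFirstMoment (Measure.dirac x) := by
  refine ⟨inferInstance, x, ?_⟩
  refine ⟨(continuous_const.dist continuous_id).aestronglyMeasurable, ?_⟩
  have hm : Measurable fun y : E => (‖dist x y‖₊ : ℝ≥0∞) :=
    (continuous_const.dist continuous_id).measurable.nnnorm.coe_nnreal_ennreal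
  simp [HasFiniteIntegral, lintegral_dirac' _ hm]

lemma ffm_integrable_dist {μ : Measure E} (h : FiniteFirstMoment μ) (z : E) :
    Integrable (fun y => dist z y) μ := by
  obtain ⟨hprob, x₀, hx₀⟩ := h
  haveI := hprob
  refine Integrable.mono' ((integrable_const (dist z x₀)).add hx₀)
    (continuous_const.dist continuous_id).aestronglyMeasurable ?_
  filter_upwards with y
  rw [Real.norm_eq_abs, abs_of_nonneg dist_nonneg]
  exact dist_triangle z x₀ y

lemma ffm_integrable_lipschitz {μ : Measure E} (h : FiniteFirstMoment μ) {K : ℝ≥0}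
    {f : E → ℝ} (hf : LipschitzWith K f) : Integrable f μ := by
  obtain ⟨hprob, x₀, hx₀⟩ := h
  haveI := hprob
  refine Integrable.mono' ((integrable_const |f x₀|).add (hx₀.const_mul K))
    hf.continuous.aestronglyMeasurable ?_
  filter_upwards with y
  have h1 : |f y - f x₀| ≤ (K : ℝ) * dist x₀ y := by
    have := hf.dist_le_mul y x₀
    rw [Real.dist_eq] at this
    simpa [dist_comm] using this
  rw [Real.norm_eq_abs]
  calc |f y| = |f x₀ + (f y - f x₀)| := by ring_nf
    _ ≤ |f x₀| + |f y - f x₀| := abs_add_le _ _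
    _ ≤ |f x₀| + (K : ℝ) * dist x₀ y := by linarith

lemma integral_sub_const_eq {μ : Measure E} (h : FiniteFirstMoment μ) {f : E → ℝ}
    (hint : Integrable f μ) (x₀ : E) :
    (∫ x, f x ∂μ) - f x₀ = ∫ x, (f x - f x₀) ∂μ := by
  haveI := h.1
  rw [integral_sub hint (integrable_const _), integral_const]
  simp

lemma abs_int_sub_le {μ : Measure E} (h : FiniteFirstMoment μ) {f : E → ℝ}
    (hf : LipschitzWith 1 f) (x₀ : E) :
    |(∫ x, f x ∂μ) - f x₀| ≤ ∫ x, dist x₀ x ∂μ := by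
  haveI := h.1
  have hint := ffm_integrable_lipschitz h hf
  rw [integral_sub_const_eq h hint x₀]
  calc |∫ x, (f x - f x₀) ∂μ| ≤ ∫ x, |f x - f x₀| ∂μ := by
        simpa [Real.norm_eq_abs] using norm_integral_le_integral_norm (fun x => f x - f x₀) (μ := μ)
    _ ≤ ∫ x, dist x₀ x ∂μ := by
        refine integral_mono (hint.sub (integrable_const _)).abs (ffm_integrable_dist h x₀) ?_
        intro y
        have := hf.dist_le_mul y x₀
        rw [Real.dist_eq] at this
        simpa [dist_comm] using this

lemma wassSet_bddAbove {ν₁ ν₂ : Measure E} (h1 : FiniteFirstMoment ν₁) (h2 : FiniteFirstMoment ν₂) :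
    BddAbove {r : ℝ | ∃ f : E → ℝ, LipschitzWith 1 f ∧ r = |∫ x, f x ∂ν₁ - ∫ x, f x ∂ν₂|} := by
  obtain ⟨x₀, hx₀⟩ := h1.2
  refine ⟨(∫ x, dist x₀ x ∂ν₁) + ∫ x, dist x₀ x ∂ν₂, ?_⟩
  rintro r ⟨f, hf, rfl⟩
  have b1 := abs_int_sub_le h1 hf x₀
  have b2 := abs_int_sub_le h2 hf x₀
  calc |(∫ x, f x ∂ν₁) - ∫ x, f x ∂ν₂|
      = |((∫ x, f x ∂ν₁) - f x₀) - ((∫ x, f x ∂ν₂) - f x₀)| := by ring_nf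
    _ ≤ |(∫ x, f x ∂ν₁) - f x₀| + |(∫ x, f x ∂ν₂) - f x₀| := abs_sub _ _
    _ ≤ _ := add_le_add b1 b2

lemma abs_integral_sub_le_wass {ν₁ ν₂ : Measure E} (h1 : FiniteFirstMoment ν₁)
    (h2 : FiniteFirstMoment ν₂) {K : ℝ≥0} {f : E → ℝ} (hf : LipschitzWith K f) :
    |(∫ x, f x ∂ν₁) - ∫ x, f x ∂ν₂| ≤ (K : ℝ) * wassDist ν₁ ν₂ := by
  by_cases hK : K = 0
  · obtain ⟨x₀, _⟩ := h1.2
    haveI := h1.1; haveI := h2.1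
    have hfc : ∀ y, f y = f x₀ := by
      intro y
      have := hf.dist_le_mul y x₀
      rw [hK] at this
      simpa [dist_le_zero] using this
    have e1 : (∫ x, f x ∂ν₁) = f x₀ := by
      rw [show f = fun _ => f x₀ from funext hfc, integral_const]; simp
    have e2 : (∫ x, f x ∂ν₂) = f x₀ := by
      rw [show f = fun _ => f x₀ from funext hfc, integral_const]; simp
    simp [e1, e2, hK]
  · have hKpos : (0 : ℝ) < K := by positivity
    set g : E → ℝ := fun y => (K : ℝ)⁻¹ * f y with hgdef
    have hg : LipschitzWith 1 g := by
      apply LipschitzWith.of_dist_le_mul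
      intro x y
      have h := hf.dist_le_mul x y
      rw [Real.dist_eq] at h ⊢
      have : |g x - g y| = (K : ℝ)⁻¹ * |f x - f y| := by
        rw [hgdef]
        show |(K : ℝ)⁻¹ * f x - (K : ℝ)⁻¹ * f y| = _
        rw [← mul_sub, abs_mul, abs_of_nonneg (by positivity : (0:ℝ) ≤ (K:ℝ)⁻¹)]
      rw [this]
      calc (K : ℝ)⁻¹ * |f x - f y| ≤ (K : ℝ)⁻¹ * ((K : ℝ) * dist x y) := by
            apply mul_le_mul_of_nonneg_left h (by positivity)
        _ = 1 * dist x y := by field_simp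
    have hmem : |(∫ x, g x ∂ν₁) - ∫ x, g x ∂ν₂| ∈
        {r : ℝ | ∃ f : E → ℝ, LipschitzWith 1 f ∧ r = |∫ x, f x ∂ν₁ - ∫ x, f x ∂ν₂|} :=
      ⟨g, hg, rfl⟩
    have hle := le_csSup (wassSet_bddAbove h1 h2) hmem
    have e1 : (∫ x, g x ∂ν₁) = (K : ℝ)⁻¹ * ∫ x, f x ∂ν₁ := integral_const_mul _ _
    have e2 : (∫ x, g x ∂ν₂) = (K : ℝ)⁻¹ * ∫ x, f x ∂ν₂ := integral_const_mul _ _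
    rw [e1, e2, ← mul_sub, abs_mul, abs_of_nonneg (by positivity : (0:ℝ) ≤ (K:ℝ)⁻¹)] at hle
    have := mul_le_mul_of_nonneg_left hle (le_of_lt hKpos)
    rw [← mul_assoc, mul_inv_cancel₀ (ne_of_gt hKpos), one_mul] at this
    exact this

lemma wassDist_dirac_le (x y : E) :
    wassDist (Measure.dirac x) (Measure.dirac y) ≤ dist x y := by
  apply Real.sSup_le _ dist_nonneg
  rintro r ⟨f, hf, rfl⟩
  rw [integral_dirac' f x hf.continuous.stronglyMeasurable,
    integral_dirac' f y hf.continuous.stronglyMeasurable]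
  have := hf.dist_le_mul x y
  rw [Real.dist_eq] at this
  simpa using this

lemma kpow_isMarkov (π : Kernel E E) [IsMarkovKernel π] :
    ∀ m, IsMarkovKernel (kpow π m)
  | 0 => by rw [kpow]; infer_instance
  | m + 1 => by
    rw [kpow]
    haveI := kpow_isMarkov π m
    infer_instance

lemma kpow_comp_comm (π : Kernel E E) [IsMarkovKernel π] :
    ∀ m, kpow π m ∘ₖ π = π ∘ₖ kpow π m
  | 0 => by rw [kpow, Kernel.id_comp, Kernel.comp_id]
  | m + 1 => by
    haveI := kpow_isMarkov π m
    rw [kpow]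
    conv_lhs => rw [kpow_comp_comm π m]
    rw [Kernel.comp_assoc]

lemma kpow_apply_eq (π : Kernel E E) [IsMarkovKernel π] :
    ∀ (m : ℕ) (x : E), kpow π m x = (Pmeas π)^[m] (Measure.dirac x)
  | 0, x => by rw [kpow, Kernel.id_apply]; rfl
  | m + 1, x => by
    rw [kpow, kpow_comp_comm π m, Kernel.comp_apply, Function.iterate_succ_apply',
      ← kpow_apply_eq π m x]
    rfl

lemma ffm_Pmeas_iter (π : Kernel E E)
    (hH1 : ∀ ν : MeasureTheory.Measure E, FiniteFirstMoment ν → FiniteFirstMoment (Pmeas π ν)) :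
    ∀ (m : ℕ) (ν : Measure E), FiniteFirstMoment ν → FiniteFirstMoment ((Pmeas π)^[m] ν)
  | 0, ν, h => h
  | m + 1, ν, h => by
    rw [Function.iterate_succ_apply']
    exact hH1 _ (ffm_Pmeas_iter π hH1 m ν h)

lemma ffm_kpow (π : Kernel E E) [IsMarkovKernel π]
    (hH1 : ∀ ν : MeasureTheory.Measure E, FiniteFirstMoment ν → FiniteFirstMoment (Pmeas π ν))
    (m : ℕ) (x : E) : FiniteFirstMoment (kpow π m x) := by
  rw [kpow_apply_eq]
  exact ffm_Pmeas_iter π hH1 m _ (ffm_dirac x)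

lemma lipschitz_integral_kpow (π : Kernel E E) [IsMarkovKernel π] {γ c : ℝ}
    (hγ : γ ∈ Set.Ioo (0 : ℝ) 1) (hc : 0 < c)
    (hH1 : ∀ ν : MeasureTheory.Measure E, FiniteFirstMoment ν → FiniteFirstMoment (Pmeas π ν))
    (hH2 : ∀ n : ℕ, 1 ≤ n → ∀ ν₁ ν₂ : MeasureTheory.Measure E, FiniteFirstMoment ν₁ →
      FiniteFirstMoment ν₂ →
      wassDist ((Pmeas π)^[n] ν₁) ((Pmeas π)^[n] ν₂) ≤ c * γ ^ n * wassDist ν₁ ν₂)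
    (m : ℕ) (hm : 1 ≤ m) (K : ℝ≥0) (f : E → ℝ) (hf : LipschitzWith K f) :
    LipschitzWith (Real.toNNReal (c * γ ^ m) * K) (fun x => ∫ y, f y ∂(kpow π m x)) := by
  have hcγ : (0 : ℝ) ≤ c * γ ^ m := mul_nonneg hc.le (pow_nonneg hγ.1.le m)
  
  apply LipschitzWith.of_dist_le_mul
  intro x y
  rw [Real.dist_eq]
  have ffmx := ffm_kpow π hH1 m x
  have ffmy := ffm_kpow π hH1 m y
  have h2 := abs_integral_sub_le_wass ffmx ffmy hf
  have h3 : wassDist (kpow π m x) (kpow π m y) ≤ c * γ ^ m * dist x y := by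
    rw [kpow_apply_eq, kpow_apply_eq]
    calc wassDist ((Pmeas π)^[m] (Measure.dirac x)) ((Pmeas π)^[m] (Measure.dirac y))
        ≤ c * γ ^ m * wassDist (Measure.dirac x) (Measure.dirac y) :=
          hH2 m hm _ _ (ffm_dirac x) (ffm_dirac y)
      _ ≤ c * γ ^ m * dist x y :=
          mul_le_mul_of_nonneg_left (wassDist_dirac_le x y) hcγ
  have hcoe : ((Real.toNNReal (c * γ ^ m) * K : ℝ≥0) : ℝ) = (c * γ ^ m) * K := by
    push_cast
    rw [Real.coe_toNNReal _ hcγ]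
  rw [hcoe]
  calc |(∫ x_1, f x_1 ∂(kpow π m) x) - ∫ x_1, f x_1 ∂(kpow π m) y|
      ≤ (K : ℝ) * wassDist (kpow π m x) (kpow π m y) := h2
    _ ≤ (K : ℝ) * (c * γ ^ m * dist x y) := mul_le_mul_of_nonneg_left h3 K.coe_nonneg
    _ = c * γ ^ m * (K : ℝ) * dist x y := by ring

def CoordLip (L : ℝ≥0) {m : ℕ} (g : (Fin m → E) → ℝ) : Prop :=
  ∀ (j : Fin m) (y : Fin m → E), LipschitzWith L (fun z => g (Function.update y j z))

lemma CoordLip.cons {L : ℝ≥0} {m : ℕ} {g : (Fin (m + 1) → E) → ℝ} (hg : CoordLip L g) (z : E) :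
    CoordLip L (fun ys => g (Fin.cons z ys)) := by
  intro j y
  have h := hg j.succ (Fin.cons z y)
  simp only [Fin.cons_update]
  exact h

lemma coordLip_zero {L : ℝ≥0} {m : ℕ} {g : (Fin (m + 1) → E) → ℝ} (hg : CoordLip L g)
    (y y' : E) (w : Fin m → E) :
    |g (Fin.cons y w) - g (Fin.cons y' w)| ≤ (L : ℝ) * dist y y' := by
  have h := (hg 0 (Fin.cons y' w)).dist_le_mul y y'
  rw [Real.dist_eq] at h
  simpa only [Fin.update_cons_zero] using h

noncomputable def Aconst : (ℕ → ℝ≥0) → ℕ → ℝ≥0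
  | _, 0 => 0
  | a, m + 1 => a 0 * (1 + Aconst (fun j => a (j + 1)) m)

lemma key_induction (L : ℝ≥0) : ∀ (m : ℕ) (κ : ℕ → Kernel E E) (a : ℕ → ℝ≥0),
    (∀ (j : ℕ) (x : E), IsProbabilityMeasure (κ j x)) →
    (∀ (j : ℕ) (x : E) (K : ℝ≥0) (f : E → ℝ), LipschitzWith K f → Integrable f (κ j x)) →
    (∀ j : ℕ, j < m → ∀ (K : ℝ≥0) (f : E → ℝ), LipschitzWith K f →
      LipschitzWith (a j * K) (fun x => ∫ y, f y ∂(κ j x))) →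
    (∀ g : (Fin m → E) → ℝ, CoordLip L g →
      LipschitzWith (L * Aconst a m) (iterIntegral κ m g)) ∧
    (∀ (g g' : (Fin m → E) → ℝ), CoordLip L g → CoordLip L g' → ∀ ε : ℝ, 0 ≤ ε →
      (∀ w, |g w - g' w| ≤ ε) → ∀ x : E,
        |iterIntegral κ m g x - iterIntegral κ m g' x| ≤ ε) := by
  intro m
  induction m with
  | zero =>
    intro κ a _ _ _
    constructor
    · intro g _
      have : iterIntegral κ 0 g = fun _ : E => g Fin.elim0 := rfl
      rw [this, show L * Aconst a 0 = 0 by simp [Aconst]]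
      exact LipschitzWith.const' _
    · intro g g' _ _ ε hε h x
      exact h _
  | succ m ih =>
    intro κ a hprob hint hlip
    obtain ⟨ihM, ihS⟩ := ih (fun j => κ (j + 1)) (fun j => a (j + 1))
      (fun j x => hprob (j + 1) x) (fun j x => hint (j + 1) x)
      (fun j hj => hlip (j + 1) (Nat.succ_lt_succ hj))
    have hinner : ∀ g : (Fin (m + 1) → E) → ℝ, CoordLip L g →
        LipschitzWith (L * (1 + Aconst (fun j => a (j + 1)) m))
          (fun y => iterIntegral (fun j => κ (j + 1)) m (fun ys => g (Fin.cons y ys)) y) := by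
      intro g hg
      apply LipschitzWith.of_dist_le_mul
      intro y y'
      rw [Real.dist_eq]
      have t1 : |iterIntegral (fun j => κ (j + 1)) m (fun ys => g (Fin.cons y ys)) y -
          iterIntegral (fun j => κ (j + 1)) m (fun ys => g (Fin.cons y' ys)) y| ≤
          (L : ℝ) * dist y y' := by
        refine ihS _ _ (hg.cons y) (hg.cons y') ((L : ℝ) * dist y y')
          (by positivity) (fun w => coordLip_zero hg y y' w) y
      have t2 : |iterIntegral (fun j => κ (j + 1)) m (fun ys => g (Fin.cons y' ys)) y -
          iterIntegral (fun j => κ (j + 1)) m (fun ys => g (Fin.cons y' ys)) y'| ≤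
          ((L : ℝ) * (Aconst (fun j => a (j + 1)) m : ℝ)) * dist y y' := by
        have h := (ihM _ (hg.cons y')).dist_le_mul y y'
        rw [Real.dist_eq] at h
        calc _ ≤ ((L * Aconst (fun j => a (j + 1)) m : ℝ≥0) : ℝ) * dist y y' := h
          _ = _ := by push_cast; ring
      calc |iterIntegral (fun j => κ (j + 1)) m (fun ys => g (Fin.cons y ys)) y -
          iterIntegral (fun j => κ (j + 1)) m (fun ys => g (Fin.cons y' ys)) y'|
          ≤ |iterIntegral (fun j => κ (j + 1)) m (fun ys => g (Fin.cons y ys)) y -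
              iterIntegral (fun j => κ (j + 1)) m (fun ys => g (Fin.cons y' ys)) y| +
            |iterIntegral (fun j => κ (j + 1)) m (fun ys => g (Fin.cons y' ys)) y -
              iterIntegral (fun j => κ (j + 1)) m (fun ys => g (Fin.cons y' ys)) y'| := by
            apply abs_sub_le
        _ ≤ (L : ℝ) * dist y y' + ((L : ℝ) * (Aconst (fun j => a (j + 1)) m : ℝ)) * dist y y' :=
            add_le_add t1 t2
        _ = ((L * (1 + Aconst (fun j => a (j + 1)) m) : ℝ≥0) : ℝ) * dist y y' := by
            push_cast; ring
    constructor
    · intro g hg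
      have h := hlip 0 (Nat.succ_pos m) (L * (1 + Aconst (fun j => a (j + 1)) m)) _ (hinner g hg)
      have heq : iterIntegral κ (m + 1) g =
          fun x => ∫ y, iterIntegral (fun j => κ (j + 1)) m (fun ys => g (Fin.cons y ys)) y
            ∂(κ 0 x) := rfl
      rw [heq, show L * Aconst a (m + 1) = a 0 * (L * (1 + Aconst (fun j => a (j + 1)) m)) by
        rw [show Aconst a (m + 1) = a 0 * (1 + Aconst (fun j => a (j + 1)) m) from rfl]; ring]
      exact h
    · intro g g' hg hg' ε hε hgg x
      have heq : ∀ h : (Fin (m + 1) → E) → ℝ, iterIntegral κ (m + 1) h x =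
          ∫ y, iterIntegral (fun j => κ (j + 1)) m (fun ys => h (Fin.cons y ys)) y
            ∂(κ 0 x) := fun _ => rfl
      rw [heq g, heq g']
      haveI := hprob 0 x
      have i1 : Integrable
          (fun y => iterIntegral (fun j => κ (j + 1)) m (fun ys => g (Fin.cons y ys)) y)
          (κ 0 x) := hint 0 x _ _ (hinner g hg)
      have i2 : Integrable
          (fun y => iterIntegral (fun j => κ (j + 1)) m (fun ys => g' (Fin.cons y ys)) y)
          (κ 0 x) := hint 0 x _ _ (hinner g' hg')
      rw [← integral_sub i1 i2]
      have hpt : ∀ y, |iterIntegral (fun j => κ (j + 1)) m (fun ys => g (Fin.cons y ys)) y -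
          iterIntegral (fun j => κ (j + 1)) m (fun ys => g' (Fin.cons y ys)) y| ≤ ε :=
        fun y => ihS _ _ (hg.cons y) (hg'.cons y) ε hε (fun w => hgg (Fin.cons y w)) y
      calc |∫ y, (iterIntegral (fun j => κ (j + 1)) m (fun ys => g (Fin.cons y ys)) y -
              iterIntegral (fun j => κ (j + 1)) m (fun ys => g' (Fin.cons y ys)) y) ∂(κ 0 x)|
          ≤ ∫ y, |iterIntegral (fun j => κ (j + 1)) m (fun ys => g (Fin.cons y ys)) y -
              iterIntegral (fun j => κ (j + 1)) m (fun ys => g' (Fin.cons y ys)) y| ∂(κ 0 x) := by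
            simpa [Real.norm_eq_abs] using norm_integral_le_integral_norm
              (fun y => iterIntegral (fun j => κ (j + 1)) m (fun ys => g (Fin.cons y ys)) y -
                iterIntegral (fun j => κ (j + 1)) m (fun ys => g' (Fin.cons y ys)) y)
              (μ := κ 0 x)
        _ ≤ ∫ _, ε ∂(κ 0 x) := integral_mono (i1.sub i2).abs (integrable_const ε) hpt
        _ = ε := by simp [integral_const]


lemma Abound {γ c : ℝ} (hγ : γ ∈ Set.Ioo (0 : ℝ) 1) (hc : 0 < c) {n₀ : ℕ} (hn₀ : 2 ≤ n₀)
    (hγ₀ : c ^ 2 * γ ^ n₀ < 1) :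
    ∀ (m : ℕ) (a : ℕ → ℝ≥0),
      ((∀ j, j < m → j % 2 = 0 → (a j : ℝ) ≤ c * γ) →
        (∀ j, j < m → j % 2 = 1 → (a j : ℝ) ≤ c * γ ^ (n₀ - 1)) →
        (Aconst a m : ℝ) ≤ (c * γ + c ^ 2 * γ ^ n₀) / (1 - c ^ 2 * γ ^ n₀)) ∧
      ((∀ j, j < m → j % 2 = 0 → (a j : ℝ) ≤ c * γ ^ (n₀ - 1)) →
        (∀ j, j < m → j % 2 = 1 → (a j : ℝ) ≤ c * γ) →
        (Aconst a m : ℝ) ≤ c * γ ^ (n₀ - 1) *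
          (1 + (c * γ + c ^ 2 * γ ^ n₀) / (1 - c ^ 2 * γ ^ n₀))) := by
  obtain ⟨hγ0, hγ1⟩ := hγ
  have hβ : (0 : ℝ) < γ ^ (n₀ - 1) := pow_pos hγ0 _
  have hpow : γ ^ n₀ = γ ^ (n₀ - 1) * γ := by
    rw [← pow_succ]
    congr 1
    omega
  have hγ₀nonneg : (0 : ℝ) ≤ c ^ 2 * γ ^ n₀ := by positivity
  have hden : (0 : ℝ) < 1 - c ^ 2 * γ ^ n₀ := by linarith
  set X : ℝ := (c * γ + c ^ 2 * γ ^ n₀) / (1 - c ^ 2 * γ ^ n₀) with hX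
  set Y : ℝ := c * γ ^ (n₀ - 1) * (1 + X) with hY
  have hXnonneg : 0 ≤ X := by
    apply div_nonneg _ hden.le
    positivity
  have hYnonneg : 0 ≤ Y := by
    rw [hY]; positivity
  have keyX : c * γ * (1 + Y) ≤ X := by
    apply le_of_eq
    rw [hY, hX]
    field_simp
    rw [hpow]
    ring
  intro m
  induction m with
  | zero =>
    intro a
    constructor
    · intro _ _; simpa [Aconst] using hXnonneg
    · intro _ _; simpa [Aconst] using hYnonneg
  | succ m ih =>
    intro a
    have hco : (Aconst a (m + 1) : ℝ) =
        (a 0 : ℝ) * (1 + (Aconst (fun j => a (j + 1)) m : ℝ)) := by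
      rw [show Aconst a (m + 1) = a 0 * (1 + Aconst (fun j => a (j + 1)) m) from rfl]
      push_cast; ring
    have hAnn : (0 : ℝ) ≤ 1 + (Aconst (fun j => a (j + 1)) m : ℝ) := by positivity
    constructor
    · intro he ho
      have h0 : (a 0 : ℝ) ≤ c * γ := he 0 (by omega) rfl
      have hY' : (Aconst (fun j => a (j + 1)) m : ℝ) ≤ Y := by
        refine (ih (fun j => a (j + 1))).2 ?_ ?_
        · intro j hj hp; exact ho (j + 1) (by omega) (by omega)
        · intro j hj hp; exact he (j + 1) (by omega) (by omega)
      rw [hco]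
      calc (a 0 : ℝ) * (1 + (Aconst (fun j => a (j + 1)) m : ℝ))
          ≤ (c * γ) * (1 + Y) := by
            apply mul_le_mul h0 (by linarith) hAnn (by positivity)
        _ ≤ X := keyX
    · intro he ho
      have h0 : (a 0 : ℝ) ≤ c * γ ^ (n₀ - 1) := he 0 (by omega) rfl
      have hX' : (Aconst (fun j => a (j + 1)) m : ℝ) ≤ X := by
        refine (ih (fun j => a (j + 1))).1 ?_ ?_
        · intro j hj hp; exact ho (j + 1) (by omega) (by omega)
        · intro j hj hp; exact he (j + 1) (by omega) (by omega)
      rw [hco, hY]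
      apply mul_le_mul h0 (by linarith) hAnn (by positivity)

/-- Lemma 1: the iterated integral `H_{n,k}` of a function which is Lipschitz in each variable
with constant `L`, along kernels `π_l = P^{k_l}` with `k_l ≥ 1` and `k_l ≥ n₀ - 1` for even `l`,
is Lipschitz with the constant `L(cγ+1)/(1-γ₀)`, `γ₀ = c²γ^{n₀}`, independent of `n`, `k`
and the exponents `k_l`. -/
theorem lemma1_iterated_integral_lipschitz
    {E : Type*} [MeasurableSpace E] [MetricSpace E] [CompleteSpace E]
    [SecondCountableTopology E] [BorelSpace E]
    (π : Kernel E E) [IsMarkovKernel π] (γ c : ℝ) (hγ : γ ∈ Set.Ioo (0 : ℝ) 1) (hc : 0 < c)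
    -- (H1): `P` preserves `M_{1,1}`
    (hH1 : ∀ ν : MeasureTheory.Measure E, FiniteFirstMoment ν → FiniteFirstMoment (Pmeas π ν))
    -- (H2): spectral gap in the Wasserstein metric
    (hH2 : ∀ n : ℕ, 1 ≤ n → ∀ ν₁ ν₂ : MeasureTheory.Measure E, FiniteFirstMoment ν₁ →
      FiniteFirstMoment ν₂ →
      wassDist ((Pmeas π)^[n] ν₁) ((Pmeas π)^[n] ν₂) ≤ c * γ ^ n * wassDist ν₁ ν₂)
    -- `n₀ ≥ 2` with `γ₀ = c²γ^{n₀} < 1`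
    (n₀ : ℕ) (hn₀ : 2 ≤ n₀) (hγ₀ : c ^ 2 * γ ^ n₀ < 1)
    (L : ℝ≥0) (hL : 0 < L) (n k : ℕ) (hn : 1 ≤ n) (hk : 1 ≤ k)
    -- `g_{n,k}` is Lipschitz in each variable with the same constant `L`
    (g : (Fin (2 * (k + n)) → E) → ℝ)
    (hg : ∀ (j : Fin (2 * (k + n))) (y : Fin (2 * (k + n)) → E),
      LipschitzWith L (fun z => g (Function.update y j z)))
    -- the exponents `k_l`, `l = 1, …, 2(k+n)` (1-based)
    (kl : ℕ → ℕ) (hkl : ∀ l : ℕ, 1 ≤ l → l ≤ 2 * (k + n) → 1 ≤ kl l)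
    (hklEven : ∀ l : ℕ, 1 ≤ l → l ≤ 2 * (k + n) → l % 2 = 0 → n₀ - 1 ≤ kl l) :
    LipschitzWith (Real.toNNReal ((L : ℝ) * (c * γ + 1) / (1 - c ^ 2 * γ ^ n₀)))
      (iterIntegral (fun j => kpow π (kl (j + 1))) (2 * (k + n)) g) := by
    classical
  set a : ℕ → ℝ≥0 := fun j => Real.toNNReal (c * γ ^ (kl (j + 1))) with ha
  have hκprob : ∀ (j : ℕ) (x : E), IsProbabilityMeasure (kpow π (kl (j + 1)) x) :=
    fun j x => (ffm_kpow π hH1 _ x).1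
  have hκint : ∀ (j : ℕ) (x : E) (K : ℝ≥0) (f : E → ℝ), LipschitzWith K f →
      Integrable f (kpow π (kl (j + 1)) x) :=
    fun j x K f hf => ffm_integrable_lipschitz (ffm_kpow π hH1 _ x) hf
  have hκlip : ∀ j : ℕ, j < 2 * (k + n) → ∀ (K : ℝ≥0) (f : E → ℝ), LipschitzWith K f →
      LipschitzWith (a j * K) (fun x => ∫ y, f y ∂(kpow π (kl (j + 1)) x)) := by
    intro j hj K f hf
    exact lipschitz_integral_kpow π hγ hc hH1 hH2 (kl (j + 1))
      (hkl (j + 1) (by omega) (by omega)) K f hf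
  obtain ⟨HM, -⟩ := key_induction L (2 * (k + n)) (fun j => kpow π (kl (j + 1))) a
    hκprob hκint hκlip
  have hLipschitz := HM g (by exact hg)
  refine hLipschitz.weaken ?_
  have hγ0 := hγ.1
  have hγ1 := hγ.2
  have hcoe : ∀ j : ℕ, (a j : ℝ) = c * γ ^ (kl (j + 1)) := by
    intro j
    rw [ha]
    exact Real.coe_toNNReal _ (by positivity)
  have cond1 : ∀ j, j < 2 * (k + n) → j % 2 = 0 → (a j : ℝ) ≤ c * γ := by
    intro j hj hp
    rw [hcoe]
    have hk1 : 1 ≤ kl (j + 1) := hkl (j + 1) (by omega) (by omega)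
    have hpow : γ ^ (kl (j + 1)) ≤ γ ^ 1 := pow_le_pow_of_le_one hγ0.le hγ1.le hk1
    rw [pow_one] at hpow
    exact mul_le_mul_of_nonneg_left hpow hc.le
  have cond2 : ∀ j, j < 2 * (k + n) → j % 2 = 1 → (a j : ℝ) ≤ c * γ ^ (n₀ - 1) := by
    intro j hj hp
    rw [hcoe]
    have hk1 : n₀ - 1 ≤ kl (j + 1) := hklEven (j + 1) (by omega) (by omega) (by omega)
    exact mul_le_mul_of_nonneg_left (pow_le_pow_of_le_one hγ0.le hγ1.le hk1) hc.le
  have hA := (Abound hγ hc hn₀ hγ₀ (2 * (k + n)) a).1 cond1 cond2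
  have hγ₀nonneg : (0 : ℝ) ≤ c ^ 2 * γ ^ n₀ := by positivity
  have hden : (0 : ℝ) < 1 - c ^ 2 * γ ^ n₀ := by linarith
  have htgt : (0 : ℝ) ≤ (L : ℝ) * (c * γ + 1) / (1 - c ^ 2 * γ ^ n₀) := by positivity
  rw [Real.le_toNNReal_iff_coe_le htgt]
  push_cast
  calc (L : ℝ) * (Aconst a (2 * (k + n)) : ℝ)
      ≤ (L : ℝ) * ((c * γ + c ^ 2 * γ ^ n₀) / (1 - c ^ 2 * γ ^ n₀)) :=
        mul_le_mul_of_nonneg_left hA L.coe_nonneg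
    _ ≤ (L : ℝ) * (c * γ + 1) / (1 - c ^ 2 * γ ^ n₀) := by
        rw [mul_div_assoc]
        apply mul_le_mul_of_nonneg_left _ L.coe_nonneg
        gcongr
end

section
/- Under hypotheses (H0)–(H3), for every ε > 0 there exist constants c, C > 0 (independent of n) such that for all n ≥ 1: P_μ(|χ(X_n) − χ(X_0)| ≥ (ε/2)√n) ≤ c·n^{−(1+δ/2)} and P_μ(|χ(X_n) − χ(X_{n−1})| ≥ (ε/2)√n) ≤ C·n^{−(1+δ/2)}; consequently, with A_n = {|S_n − Σ_{i=1}^n ψ(X_i)| ≥ (ε/2)√n} ∪ {|Z_n − ψ(X_n)| ≥ (ε/2)√n}, the series Σ_{n=1}^∞ P_μ(A_n) converges. -/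
open MeasureTheory ProbabilityTheory Filter Bornology
open scoped ENNReal NNReal Topology

variable {E : Type*} [MeasurableSpace E] [MetricSpace E] [CompleteSpace E]
  [SecondCountableTopology E] [BorelSpace E]

set_option linter.unusedSectionVars false
set_option maxHeartbeats 1000000


/-- real-constant Lipschitz predicate -/
def MYlipR (K : ℝ) (f : E → ℝ) : Prop := ∀ x y, |f x - f y| ≤ K * dist x y

lemma MYlipR.lipschitzWith {K : ℝ} {f : E → ℝ} (hK : 0 ≤ K) (h : MYlipR K f) :
    LipschitzWith K.toNNReal f := by
  rw [lipschitzWith_iff_dist_le_mul]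
  intro x y
  rw [Real.dist_eq, Real.coe_toNNReal K hK]
  exact h x y

lemma MYlipR.continuous {K : ℝ} {f : E → ℝ} (hK : 0 ≤ K) (h : MYlipR K f) :
    Continuous f := (h.lipschitzWith hK).continuous

lemma lipschitzWith_one_iff {f : E → ℝ} : LipschitzWith 1 f ↔ MYlipR 1 f := by
  rw [lipschitzWith_iff_dist_le_mul]
  constructor <;> intro h x y <;> have := h x y <;>
    simpa [Real.dist_eq] using this

lemma MYlipR.integrable {K : ℝ} {f : E → ℝ} {ν : MeasureTheory.Measure E}
    (hK : 0 ≤ K) (hf : MYlipR K f) (hν : FiniteFirstMoment ν) : Integrable f ν := by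
  obtain ⟨hprob, x₁, hint⟩ := hν
  haveI := hprob
  refine Integrable.mono' ((integrable_const |f x₁|).add (hint.const_mul K))
    ((hf.continuous hK).aestronglyMeasurable) (Filter.Eventually.of_forall fun x => ?_)
  have h1 : |f x - f x₁| ≤ K * dist x₁ x := by rw [dist_comm]; exact hf x x₁
  calc ‖f x‖ = |f x₁ + (f x - f x₁)| := by rw [Real.norm_eq_abs]; ring_nf
    _ ≤ |f x₁| + |f x - f x₁| := abs_add_le _ _
    _ ≤ |f x₁| + K * dist x₁ x := by linarith

lemma MYffm_dirac (x : E) : FiniteFirstMoment (MeasureTheory.Measure.dirac x) :=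
  ⟨inferInstance, x, (integrable_const _).congr (ae_eq_dirac _).symm⟩

/-- For 1-Lipschitz `f` and measures with finite first moment,
`|∫ f dν₁ - ∫ f dν₂|` is bounded by moments. -/
lemma MYdual_bound {ν₁ ν₂ : MeasureTheory.Measure E} (hν₁ : FiniteFirstMoment ν₁)
    (hν₂ : FiniteFirstMoment ν₂) {x₁ : E} (hint₁ : Integrable (fun x => dist x₁ x) ν₁)
    (hint₂ : Integrable (fun x => dist x₁ x) ν₂) {f : E → ℝ} (hf : LipschitzWith 1 f) :
    |∫ x, f x ∂ν₁ - ∫ x, f x ∂ν₂| ≤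
      (∫ x, dist x₁ x ∂ν₁) + ∫ x, dist x₁ x ∂ν₂ := by
  haveI := hν₁.1; haveI := hν₂.1
  have hlip := lipschitzWith_one_iff.mp hf
  have hgint₁ : Integrable (fun x => f x - f x₁) ν₁ :=
    ((hlip.integrable zero_le_one hν₁).sub (integrable_const _))
  have hgint₂ : Integrable (fun x => f x - f x₁) ν₂ :=
    ((hlip.integrable zero_le_one hν₂).sub (integrable_const _))
  have key : ∀ (ν : MeasureTheory.Measure E), IsProbabilityMeasure ν →
      Integrable f ν → ∫ x, f x ∂ν = f x₁ + ∫ x, (f x - f x₁) ∂ν := by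
    intro ν hp hintf
    haveI := hp
    rw [integral_sub hintf (integrable_const _), integral_const]
    simp
  rw [key ν₁ hν₁.1 (hlip.integrable zero_le_one hν₁),
    key ν₂ hν₂.1 (hlip.integrable zero_le_one hν₂)]
  have habs : ∀ x, |f x - f x₁| ≤ dist x₁ x := by
    intro x
    have := hlip x x₁
    rw [dist_comm x₁ x]
    simpa using this
  have habsint : ∀ (ν : MeasureTheory.Measure E), |∫ x, (f x - f x₁) ∂ν| ≤ ∫ x, |f x - f x₁| ∂ν := by
    intro ν
    simpa [Real.norm_eq_abs] using norm_integral_le_integral_norm (fun x => f x - f x₁) (μ := ν)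
  have h₁ : |∫ x, (f x - f x₁) ∂ν₁| ≤ ∫ x, dist x₁ x ∂ν₁ :=
    (habsint ν₁).trans (integral_mono hgint₁.abs hint₁ habs)
  have h₂ : |∫ x, (f x - f x₁) ∂ν₂| ≤ ∫ x, dist x₁ x ∂ν₂ :=
    (habsint ν₂).trans (integral_mono hgint₂.abs hint₂ habs)
  have heq : f x₁ + (∫ x, (f x - f x₁) ∂ν₁) - (f x₁ + ∫ x, (f x - f x₁) ∂ν₂)
      = (∫ x, (f x - f x₁) ∂ν₁) - ∫ x, (f x - f x₁) ∂ν₂ := by ring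
  rw [heq]
  calc |(∫ x, (f x - f x₁) ∂ν₁) - ∫ x, (f x - f x₁) ∂ν₂|
      ≤ |∫ x, (f x - f x₁) ∂ν₁| + |∫ x, (f x - f x₁) ∂ν₂| := abs_sub _ _
    _ ≤ _ := add_le_add h₁ h₂

lemma MYwass_bddAbove {ν₁ ν₂ : MeasureTheory.Measure E} (hν₁ : FiniteFirstMoment ν₁)
    (hν₂ : FiniteFirstMoment ν₂) :
    BddAbove {r : ℝ | ∃ f : E → ℝ, LipschitzWith 1 f ∧ r = |∫ x, f x ∂ν₁ - ∫ x, f x ∂ν₂|} := by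
  obtain ⟨hp₁, x₁, hint₁⟩ := hν₁
  obtain ⟨hp₂, x₂, hint₂⟩ := hν₂
  haveI := hp₂
  have hint₂' : Integrable (fun x => dist x₁ x) ν₂ := by
    refine Integrable.mono' ((integrable_const (dist x₁ x₂)).add hint₂)
      (continuous_const.dist continuous_id).aestronglyMeasurable
      (Filter.Eventually.of_forall fun x => ?_)
    rw [Real.norm_eq_abs, abs_of_nonneg dist_nonneg]
    exact dist_triangle x₁ x₂ x
  refine ⟨(∫ x, dist x₁ x ∂ν₁) + ∫ x, dist x₁ x ∂ν₂, ?_⟩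
  rintro r ⟨f, hf, rfl⟩
  exact MYdual_bound ⟨hp₁, x₁, hint₁⟩ ⟨hp₂, x₂, hint₂⟩ hint₁ hint₂' hf

lemma MYle_wass {ν₁ ν₂ : MeasureTheory.Measure E} (hν₁ : FiniteFirstMoment ν₁)
    (hν₂ : FiniteFirstMoment ν₂) {f : E → ℝ} (hf : LipschitzWith 1 f) :
    |∫ x, f x ∂ν₁ - ∫ x, f x ∂ν₂| ≤ wassDist ν₁ ν₂ :=
  le_csSup (MYwass_bddAbove hν₁ hν₂) ⟨f, hf, rfl⟩

lemma MYwass_nonneg {ν₁ ν₂ : MeasureTheory.Measure E} (hν₁ : FiniteFirstMoment ν₁)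
    (hν₂ : FiniteFirstMoment ν₂) : 0 ≤ wassDist ν₁ ν₂ :=
  (abs_nonneg _).trans (MYle_wass hν₁ hν₂ ((LipschitzWith.const (0:ℝ)).weaken zero_le_one))

lemma MYlip_diff_le {K : ℝ} {f : E → ℝ} (hK : 0 ≤ K) (hf : MYlipR K f)
    {ν₁ ν₂ : MeasureTheory.Measure E} (hν₁ : FiniteFirstMoment ν₁)
    (hν₂ : FiniteFirstMoment ν₂) :
    |∫ x, f x ∂ν₁ - ∫ x, f x ∂ν₂| ≤ K * wassDist ν₁ ν₂ := by
  rcases eq_or_lt_of_le hK with hK0 | hKpos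
  · obtain ⟨x₁, _⟩ := hν₁.2
    have hconst : ∀ x, f x = f x₁ := by
      intro x
      have := hf x x₁
      rw [← hK0] at this
      simp only [zero_mul] at this
      have := abs_nonpos_iff.mp (this.trans_eq rfl)
      linarith [sub_eq_zero.mp this]
    haveI := hν₁.1; haveI := hν₂.1
    have h1 : ∫ x, f x ∂ν₁ = f x₁ := by
      rw [show (fun x => f x) = fun _ => f x₁ from funext hconst, integral_const]; simp
    have h2 : ∫ x, f x ∂ν₂ = f x₁ := by
      rw [show (fun x => f x) = fun _ => f x₁ from funext hconst, integral_const]; simp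
    rw [h1, h2, sub_self, abs_zero, ← hK0, zero_mul]
  · have hg : LipschitzWith 1 (fun x => K⁻¹ * f x) := by
      rw [lipschitzWith_iff_dist_le_mul]
      intro x y
      rw [Real.dist_eq]
      have : |K⁻¹ * f x - K⁻¹ * f y| = K⁻¹ * |f x - f y| := by
        rw [← mul_sub, abs_mul, abs_of_nonneg (inv_nonneg.mpr hK)]
      rw [this]
      calc K⁻¹ * |f x - f y| ≤ K⁻¹ * (K * dist x y) :=
            mul_le_mul_of_nonneg_left (hf x y) (inv_nonneg.mpr hK)
        _ = 1 * dist x y := by field_simp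
    have := MYle_wass hν₁ hν₂ hg
    rw [integral_const_mul, integral_const_mul, ← mul_sub, abs_mul,
      abs_of_nonneg (inv_nonneg.mpr hK)] at this
    calc |∫ x, f x ∂ν₁ - ∫ x, f x ∂ν₂|
        = K * (K⁻¹ * |∫ x, f x ∂ν₁ - ∫ x, f x ∂ν₂|) := by field_simp
      _ ≤ K * wassDist ν₁ ν₂ := mul_le_mul_of_nonneg_left this hK

lemma MYwass_dirac_le (x y : E) :
    wassDist (MeasureTheory.Measure.dirac x) (MeasureTheory.Measure.dirac y) ≤ dist x y := by
  refine csSup_le ⟨0, fun _ => (0:ℝ), (LipschitzWith.const (0:ℝ)).weaken zero_le_one, by simp⟩ ?_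
  rintro r ⟨f, hf, rfl⟩
  rw [integral_dirac, integral_dirac]
  have := (lipschitzWith_one_iff.mp hf) x y
  simpa using this

lemma MYPmeas_dirac (π : Kernel E E) (x : E) :
    Pmeas π (MeasureTheory.Measure.dirac x) = π x :=
  MeasureTheory.Measure.dirac_bind (π.measurable) x

lemma MYintegral_Pmeas (π : Kernel E E) [IsMarkovKernel π] {K : ℝ} {f : E → ℝ}
    (hK : 0 ≤ K) (hf : MYlipR K f) {ν : MeasureTheory.Measure E} (hν : FiniteFirstMoment ν)
    (hPν : FiniteFirstMoment (Pmeas π ν)) :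
    ∫ x, f x ∂(Pmeas π ν) = ∫ x, Pfun π f x ∂ν := by
  haveI := hν.1
  have hfc : Continuous f := hf.continuous hK
  have hbind : Pmeas π ν = (ν.compProd π).map Prod.snd := by
    unfold Pmeas
    ext s hs
    rw [MeasureTheory.Measure.map_apply measurable_snd hs,
      MeasureTheory.Measure.compProd_apply (measurable_snd hs),
      MeasureTheory.Measure.bind_apply hs (π.measurable.aemeasurable)]
    rfl
  have hint : Integrable f (Pmeas π ν) := hf.integrable hK hPν
  have hmeas' : AEStronglyMeasurable f ((ν.compProd π).map Prod.snd) := by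
    rw [← hbind]; exact hfc.aestronglyMeasurable
  have hint2 : Integrable (fun p : E × E => f p.2) (ν.compProd π) := by
    rw [hbind] at hint
    exact (integrable_map_measure hmeas' measurable_snd.aemeasurable).mp hint
  calc ∫ x, f x ∂(Pmeas π ν) = ∫ x, f x ∂((ν.compProd π).map Prod.snd) := by rw [hbind]
    _ = ∫ p, f p.2 ∂(ν.compProd π) := integral_map measurable_snd.aemeasurable hmeas'
    _ = ∫ a, ∫ b, f b ∂(π a) ∂ν := MeasureTheory.Measure.integral_compProd hint2
    _ = ∫ x, Pfun π f x ∂ν := rfl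

section Iter

variable (π : Kernel E E) [IsMarkovKernel π]
  (hH1 : ∀ ν : MeasureTheory.Measure E, FiniteFirstMoment ν → FiniteFirstMoment (Pmeas π ν))

include hH1

lemma MYffm_iter (i : ℕ) {ν : MeasureTheory.Measure E} (hν : FiniteFirstMoment ν) :
    FiniteFirstMoment ((Pmeas π)^[i] ν) := by
  induction i generalizing ν with
  | zero => exact hν
  | succ n ih =>
    rw [Function.iterate_succ_apply]
    exact ih (hH1 ν hν)

variable {γ c : ℝ} (hγ : γ ∈ Set.Ioo (0:ℝ) 1) (hc : 0 < c)
  (hH2 : ∀ n : ℕ, 1 ≤ n → ∀ ν₁ ν₂ : MeasureTheory.Measure E, FiniteFirstMoment ν₁ →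
      FiniteFirstMoment ν₂ →
      wassDist ((Pmeas π)^[n] ν₁) ((Pmeas π)^[n] ν₂) ≤ c * γ ^ n * wassDist ν₁ ν₂)

include hH1 hγ hc hH2

lemma MYlip_Pfun {K : ℝ} {f : E → ℝ} (hK : 0 ≤ K) (hf : MYlipR K f) :
    MYlipR (K * (c * γ)) (Pfun π f) := by
  obtain ⟨hγ0, hγ1⟩ := hγ
  intro x y
  have hdx := MYffm_dirac (E := E) x
  have hdy := MYffm_dirac (E := E) y
  have h1 : Pfun π f x = ∫ z, f z ∂(Pmeas π (MeasureTheory.Measure.dirac x)) := by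
    rw [MYPmeas_dirac]; rfl
  have h2 : Pfun π f y = ∫ z, f z ∂(Pmeas π (MeasureTheory.Measure.dirac y)) := by
    rw [MYPmeas_dirac]; rfl
  rw [h1, h2]
  have hQ1 : ∀ z : E, Pmeas π (MeasureTheory.Measure.dirac z)
      = (Pmeas π)^[1] (MeasureTheory.Measure.dirac z) := by intro z; simp
  calc |(∫ z, f z ∂(Pmeas π (MeasureTheory.Measure.dirac x))) -
        ∫ z, f z ∂(Pmeas π (MeasureTheory.Measure.dirac y))|
      ≤ K * wassDist (Pmeas π (MeasureTheory.Measure.dirac x))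
          (Pmeas π (MeasureTheory.Measure.dirac y)) :=
        MYlip_diff_le hK hf (hH1 _ hdx) (hH1 _ hdy)
    _ ≤ K * (c * γ ^ 1 * wassDist (MeasureTheory.Measure.dirac x)
          (MeasureTheory.Measure.dirac y)) := by
        refine mul_le_mul_of_nonneg_left ?_ hK
        rw [hQ1 x, hQ1 y]
        exact hH2 1 le_rfl _ _ hdx hdy
    _ ≤ K * (c * γ ^ 1 * dist x y) := by
        refine mul_le_mul_of_nonneg_left (mul_le_mul_of_nonneg_left
          (MYwass_dirac_le x y) (by positivity)) hK
    _ = K * (c * γ) * dist x y := by ring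

lemma MYlip_iter {K : ℝ} {f : E → ℝ} (hK : 0 ≤ K) (hf : MYlipR K f) (i : ℕ) :
    MYlipR (K * (c * γ) ^ i) ((Pfun π)^[i] f) := by
  have hγ0 := hγ.1
  induction i with
  | zero => simpa using hf
  | succ n ih =>
    rw [Function.iterate_succ_apply']
    have := MYlip_Pfun π hH1 hγ hc hH2 (K := K * (c * γ) ^ n) (by positivity) ih
    have heq : K * (c * γ) ^ n * (c * γ) = K * (c * γ) ^ (n + 1) := by ring
    rwa [heq] at this

lemma MYiter_nonneg (K : ℝ) (hK : 0 ≤ K) (i : ℕ) : (0:ℝ) ≤ K * (c * γ) ^ i := by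
  have hγ0 := hγ.1; positivity

lemma MYintegral_iter {K : ℝ} {f : E → ℝ} (hK : 0 ≤ K) (hf : MYlipR K f) (i : ℕ)
    {ν : MeasureTheory.Measure E} (hν : FiniteFirstMoment ν) :
    ∫ x, f x ∂((Pmeas π)^[i] ν) = ∫ x, ((Pfun π)^[i] f) x ∂ν := by
  have hγ0 := hγ.1
  induction i generalizing ν with
  | zero => rfl
  | succ n ih =>
    rw [Function.iterate_succ_apply, ih (hH1 ν hν), Function.iterate_succ_apply']
    exact MYintegral_Pmeas π (by positivity : (0:ℝ) ≤ K * (c*γ)^n)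
      (MYlip_iter π hH1 hγ hc hH2 hK hf n) hν (hH1 ν hν)

end Iter

section Chi

variable (π : Kernel E E) [IsMarkovKernel π]
  (hH1 : ∀ ν : MeasureTheory.Measure E, FiniteFirstMoment ν → FiniteFirstMoment (Pmeas π ν))
  {γ c : ℝ} (hγ : γ ∈ Set.Ioo (0:ℝ) 1) (hc : 0 < c)
  (hH2 : ∀ n : ℕ, 1 ≤ n → ∀ ν₁ ν₂ : MeasureTheory.Measure E, FiniteFirstMoment ν₁ →
      FiniteFirstMoment ν₂ →
      wassDist ((Pmeas π)^[n] ν₁) ((Pmeas π)^[n] ν₂) ≤ c * γ ^ n * wassDist ν₁ ν₂)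
  {μstar : MeasureTheory.Measure E} (hμstar : FiniteFirstMoment μstar)
  (hinv : Pmeas π μstar = μstar)
  {K : ℝ} {ψ : E → ℝ} (hK : 0 ≤ K) (hψlip : MYlipR K ψ) (hψ0 : ∫ x, ψ x ∂μstar = 0)

include hH1 hγ hc hH2 hμstar hinv hK hψlip hψ0

lemma MYbound_iter (i : ℕ) (x : E) :
    |(Pfun π)^[i] ψ x| ≤ K * max c 1 * γ ^ i *
      wassDist (MeasureTheory.Measure.dirac x) μstar := by
  obtain ⟨hγ0, hγ1⟩ := hγ
  have hwnn : 0 ≤ wassDist (MeasureTheory.Measure.dirac x) μstar :=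
    MYwass_nonneg (MYffm_dirac x) hμstar
  cases i with
  | zero =>
    have h1 : (Pfun π)^[0] ψ x = (∫ z, ψ z ∂(MeasureTheory.Measure.dirac x))
        - ∫ z, ψ z ∂μstar := by
      rw [integral_dirac, hψ0]; simp
    rw [h1]
    calc |(∫ z, ψ z ∂(MeasureTheory.Measure.dirac x)) - ∫ z, ψ z ∂μstar|
        ≤ K * wassDist (MeasureTheory.Measure.dirac x) μstar :=
          MYlip_diff_le hK hψlip (MYffm_dirac x) hμstar
      _ ≤ K * max c 1 * γ ^ 0 * wassDist (MeasureTheory.Measure.dirac x) μstar := by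
          rw [pow_zero, mul_one]
          have : K * 1 ≤ K * max c 1 :=
            mul_le_mul_of_nonneg_left (le_max_right c 1) hK
          nlinarith
  | succ n =>
    have hfix : (Pmeas π)^[n+1] μstar = μstar := Function.iterate_fixed hinv (n+1)
    have h1 : (Pfun π)^[n+1] ψ x
        = (∫ z, ψ z ∂((Pmeas π)^[n+1] (MeasureTheory.Measure.dirac x)))
          - ∫ z, ψ z ∂((Pmeas π)^[n+1] μstar) := by
      rw [MYintegral_iter π hH1 ⟨hγ0, hγ1⟩ hc hH2 hK hψlip (n+1) (MYffm_dirac x),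
        integral_dirac, hfix, hψ0, sub_zero]
    rw [h1]
    calc |(∫ z, ψ z ∂((Pmeas π)^[n+1] (MeasureTheory.Measure.dirac x)))
          - ∫ z, ψ z ∂((Pmeas π)^[n+1] μstar)|
        ≤ K * wassDist ((Pmeas π)^[n+1] (MeasureTheory.Measure.dirac x))
            ((Pmeas π)^[n+1] μstar) :=
          MYlip_diff_le hK hψlip (MYffm_iter π hH1 (n+1) (MYffm_dirac x))
            (MYffm_iter π hH1 (n+1) hμstar)
      _ ≤ K * (c * γ ^ (n+1) * wassDist (MeasureTheory.Measure.dirac x) μstar) :=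
          mul_le_mul_of_nonneg_left
            (hH2 (n+1) (Nat.le_add_left 1 n) _ _ (MYffm_dirac x) hμstar) hK
      _ ≤ K * max c 1 * γ ^ (n+1) * wassDist (MeasureTheory.Measure.dirac x) μstar := by
          have h2 : c ≤ max c 1 := le_max_left c 1
          have h3 : (0:ℝ) ≤ γ ^ (n+1) := by positivity
          have h4 : K * c * (γ ^ (n+1) * wassDist (MeasureTheory.Measure.dirac x) μstar)
              ≤ K * max c 1 * (γ ^ (n+1) * wassDist (MeasureTheory.Measure.dirac x) μstar) :=
            mul_le_mul_of_nonneg_right (mul_le_mul_of_nonneg_left h2 hK)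
              (mul_nonneg h3 hwnn)
          linear_combination h4

lemma MYdiff_iter (i : ℕ) (x y : E) :
    |(Pfun π)^[i] ψ x - (Pfun π)^[i] ψ y| ≤ K * max c 1 * γ ^ i * dist x y := by
  obtain ⟨hγ0, hγ1⟩ := hγ
  cases i with
  | zero =>
    have := hψlip x y
    have h2 : K * 1 * 1 * dist x y ≤ K * max c 1 * γ ^ 0 * dist x y := by
      rw [pow_zero]
      have : K * 1 ≤ K * max c 1 := mul_le_mul_of_nonneg_left (le_max_right c 1) hK
      nlinarith [dist_nonneg (x := x) (y := y)]
    simpa using this.trans (by simpa using h2)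
  | succ n =>
    have h1 : ∀ z : E, (Pfun π)^[n+1] ψ z
        = ∫ w, ψ w ∂((Pmeas π)^[n+1] (MeasureTheory.Measure.dirac z)) := by
      intro z
      rw [MYintegral_iter π hH1 ⟨hγ0, hγ1⟩ hc hH2 hK hψlip (n+1) (MYffm_dirac z),
        integral_dirac]
    rw [h1 x, h1 y]
    calc |(∫ w, ψ w ∂((Pmeas π)^[n+1] (MeasureTheory.Measure.dirac x)))
          - ∫ w, ψ w ∂((Pmeas π)^[n+1] (MeasureTheory.Measure.dirac y))|
        ≤ K * wassDist ((Pmeas π)^[n+1] (MeasureTheory.Measure.dirac x))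
            ((Pmeas π)^[n+1] (MeasureTheory.Measure.dirac y)) :=
          MYlip_diff_le hK hψlip (MYffm_iter π hH1 (n+1) (MYffm_dirac x))
            (MYffm_iter π hH1 (n+1) (MYffm_dirac y))
      _ ≤ K * (c * γ ^ (n+1) * wassDist (MeasureTheory.Measure.dirac x)
            (MeasureTheory.Measure.dirac y)) :=
          mul_le_mul_of_nonneg_left
            (hH2 (n+1) (Nat.le_add_left 1 n) _ _ (MYffm_dirac x) (MYffm_dirac y)) hK
      _ ≤ K * (c * γ ^ (n+1) * dist x y) := by
          refine mul_le_mul_of_nonneg_left (mul_le_mul_of_nonneg_left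
            (MYwass_dirac_le x y) (by positivity)) hK
      _ ≤ K * max c 1 * γ ^ (n+1) * dist x y := by
          have h2 : c ≤ max c 1 := le_max_left c 1
          have h3 : (0:ℝ) ≤ γ ^ (n+1) := by positivity
          have h4 : K * c * (γ ^ (n+1) * dist x y)
              ≤ K * max c 1 * (γ ^ (n+1) * dist x y) :=
            mul_le_mul_of_nonneg_right (mul_le_mul_of_nonneg_left h2 hK)
              (mul_nonneg h3 dist_nonneg)
          linear_combination h4

lemma MYsummable_iter (x : E) : Summable (fun i => (Pfun π)^[i] ψ x) := by
  refine Summable.of_norm_bounded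
    (g := fun i => (K * max c 1 * wassDist (MeasureTheory.Measure.dirac x) μstar) * γ ^ i)
    ((summable_geometric_of_lt_one hγ.1.le hγ.2).mul_left _) (fun i => ?_)
  rw [Real.norm_eq_abs]
  calc |(Pfun π)^[i] ψ x| ≤ K * max c 1 * γ ^ i *
        wassDist (MeasureTheory.Measure.dirac x) μstar :=
      MYbound_iter π hH1 hγ hc hH2 hμstar hinv hK hψlip hψ0 i x
    _ = (K * max c 1 * wassDist (MeasureTheory.Measure.dirac x) μstar) * γ ^ i := by ring

lemma MYchi_lip : MYlipR (K * max c 1 * (1 - γ)⁻¹) (chiFun π ψ) := by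
  intro x y
  have hsx := MYsummable_iter π hH1 hγ hc hH2 hμstar hinv hK hψlip hψ0 x
  have hsy := MYsummable_iter π hH1 hγ hc hH2 hμstar hinv hK hψlip hψ0 y
  have hsub : chiFun π ψ x - chiFun π ψ y
      = ∑' i : ℕ, ((Pfun π)^[i] ψ x - (Pfun π)^[i] ψ y) := (Summable.tsum_sub hsx hsy).symm
  rw [hsub]
  have hgeom : HasSum (fun i : ℕ => (K * max c 1 * dist x y) * γ ^ i)
      ((K * max c 1 * dist x y) * (1 - γ)⁻¹) :=
    (hasSum_geometric_of_lt_one hγ.1.le hγ.2).mul_left _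
  have hb := tsum_of_norm_bounded hgeom (fun i => by
    rw [Real.norm_eq_abs]
    calc |(Pfun π)^[i] ψ x - (Pfun π)^[i] ψ y| ≤ K * max c 1 * γ ^ i * dist x y :=
        MYdiff_iter π hH1 hγ hc hH2 hμstar hinv hK hψlip hψ0 i x y
      _ = (K * max c 1 * dist x y) * γ ^ i := by ring)
  rw [Real.norm_eq_abs] at hb
  calc |∑' i : ℕ, ((Pfun π)^[i] ψ x - (Pfun π)^[i] ψ y)|
      ≤ (K * max c 1 * dist x y) * (1 - γ)⁻¹ := hb
    _ = K * max c 1 * (1 - γ)⁻¹ * dist x y := by ring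

end Chi

lemma MYfour_rpow {a b c d p : ℝ} (ha : 0 ≤ a) (hb : 0 ≤ b) (hc : 0 ≤ c) (hd : 0 ≤ d)
    (hp : 0 ≤ p) : (a + b + c + d) ^ p ≤ 4 ^ p * (a ^ p + b ^ p + c ^ p + d ^ p) := by
  set m := max (max a b) (max c d) with hm
  have hm0 : 0 ≤ m := le_trans ha ((le_max_left a b).trans (le_max_left _ _))
  have hsum : a + b + c + d ≤ 4 * m := by
    have h1 : a ≤ m := (le_max_left a b).trans (le_max_left _ _)
    have h2 : b ≤ m := (le_max_right a b).trans (le_max_left _ _)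
    have h3 : c ≤ m := (le_max_left c d).trans (le_max_right _ _)
    have h4 : d ≤ m := (le_max_right c d).trans (le_max_right _ _)
    linarith
  have hmp : m ^ p ≤ a ^ p + b ^ p + c ^ p + d ^ p := by
    have hap : 0 ≤ a ^ p := Real.rpow_nonneg ha p
    have hbp : 0 ≤ b ^ p := Real.rpow_nonneg hb p
    have hcp : 0 ≤ c ^ p := Real.rpow_nonneg hc p
    have hdp : 0 ≤ d ^ p := Real.rpow_nonneg hd p
    rcases max_cases (max a b) (max c d) with ⟨h, _⟩ | ⟨h, _⟩ <;> rw [hm, h]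
    · rcases max_cases a b with ⟨h', _⟩ | ⟨h', _⟩ <;> rw [h'] <;> linarith
    · rcases max_cases c d with ⟨h', _⟩ | ⟨h', _⟩ <;> rw [h'] <;> linarith
  calc (a + b + c + d) ^ p ≤ (4 * m) ^ p :=
        Real.rpow_le_rpow (by linarith) hsum hp
    _ = 4 ^ p * m ^ p := Real.mul_rpow (by norm_num) hm0
    _ ≤ 4 ^ p * (a ^ p + b ^ p + c ^ p + d ^ p) :=
        mul_le_mul_of_nonneg_left hmp (Real.rpow_nonneg (by norm_num) p)

lemma MYmarkov_rpow {Ω : Type*} [MeasurableSpace Ω] (P : MeasureTheory.Measure Ω)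
    [IsProbabilityMeasure P] (Y : Ω → ℝ) (p : ℝ) (hp : 0 ≤ p)
    (hint : Integrable (fun ω => |Y ω| ^ p) P) {B a : ℝ}
    (hB : ∫ ω, |Y ω| ^ p ∂P ≤ B) (ha : 0 < a) :
    P {ω | a ≤ |Y ω|} ≤ ENNReal.ofReal (B / a ^ p) := by
  have hap : 0 < a ^ p := Real.rpow_pos_of_pos ha p
  have hsub : {ω | a ≤ |Y ω|} ⊆ {ω | a ^ p ≤ |Y ω| ^ p} := fun ω h =>
    Real.rpow_le_rpow ha.le h hp
  have h1 := mul_meas_ge_le_integral_of_nonneg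
    (Filter.Eventually.of_forall fun ω => Real.rpow_nonneg (abs_nonneg (Y ω)) p) hint (a ^ p)
  have h2 : (P {ω | a ^ p ≤ |Y ω| ^ p}).toReal ≤ B / a ^ p := by
    rw [le_div_iff₀ hap]
    calc (P {ω | a ^ p ≤ |Y ω| ^ p}).toReal * a ^ p
        = a ^ p * (P {ω | a ^ p ≤ |Y ω| ^ p}).toReal := mul_comm _ _
      _ ≤ ∫ ω, |Y ω| ^ p ∂P := h1
      _ ≤ B := hB
  calc P {ω | a ≤ |Y ω|} ≤ P {ω | a ^ p ≤ |Y ω| ^ p} := measure_mono hsub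
    _ = ENNReal.ofReal ((P {ω | a ^ p ≤ |Y ω| ^ p}).toReal) :=
        (ENNReal.ofReal_toReal (measure_ne_top P _)).symm
    _ ≤ ENNReal.ofReal (B / a ^ p) := ENNReal.ofReal_le_ofReal h2

lemma MYmoment_le {P : MeasureTheory.Measure (ℕ → E)} [IsProbabilityMeasure P]
    (x₀ : E) {p : ℝ} (hp : 0 ≤ p)
    (hH3int : ∀ n : ℕ, Integrable (fun ω : ℕ → E => dist x₀ (ω n) ^ p) P)
    {M : ℝ} (hM : ∀ n : ℕ, ∫ ω : ℕ → E, dist x₀ (ω n) ^ p ∂P ≤ M)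
    {Y : (ℕ → E) → ℝ} (hY : Measurable Y) {A K : ℝ} (hA : 0 ≤ A) (hK : 0 ≤ K)
    (j k l : ℕ)
    (hbd : ∀ ω, |Y ω| ≤ A + K * dist x₀ (ω j) + K * dist x₀ (ω k) + K * dist x₀ (ω l)) :
    Integrable (fun ω => |Y ω| ^ p) P ∧
      ∫ ω, |Y ω| ^ p ∂P ≤ 4 ^ p * (A ^ p + 3 * (K ^ p * M)) := by
  set g : (ℕ → E) → ℝ := fun ω => 4 ^ p * (A ^ p + K ^ p * dist x₀ (ω j) ^ p
    + K ^ p * dist x₀ (ω k) ^ p + K ^ p * dist x₀ (ω l) ^ p) with hg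
  have hptw : ∀ ω, |Y ω| ^ p ≤ g ω := by
    intro ω
    have h1 : |Y ω| ^ p ≤ (A + K * dist x₀ (ω j) + K * dist x₀ (ω k)
        + K * dist x₀ (ω l)) ^ p :=
      Real.rpow_le_rpow (abs_nonneg _) (hbd ω) hp
    have h2 := MYfour_rpow hA (mul_nonneg hK (dist_nonneg (x := x₀) (y := ω j)))
      (mul_nonneg hK (dist_nonneg (x := x₀) (y := ω k)))
      (mul_nonneg hK (dist_nonneg (x := x₀) (y := ω l))) hp
    have h3 : ∀ n : ℕ, (K * dist x₀ (ω n)) ^ p = K ^ p * dist x₀ (ω n) ^ p := fun n =>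
      Real.mul_rpow hK dist_nonneg
    rw [h3 j, h3 k, h3 l] at h2
    exact h1.trans h2
  have hgint : Integrable g P := by
    refine Integrable.const_mul ?_ _
    exact (((integrable_const (A ^ p)).add ((hH3int j).const_mul (K ^ p))).add
      ((hH3int k).const_mul (K ^ p))).add ((hH3int l).const_mul (K ^ p))
  have hYm : Measurable fun ω => |Y ω| ^ p :=
    (Real.continuous_rpow_const hp).measurable.comp hY.abs
  have hint : Integrable (fun ω => |Y ω| ^ p) P := by
    refine Integrable.mono' hgint hYm.aestronglyMeasurable
      (Filter.Eventually.of_forall fun ω => ?_)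
    rw [Real.norm_eq_abs, abs_of_nonneg (Real.rpow_nonneg (abs_nonneg _) p)]
    exact hptw ω
  refine ⟨hint, ?_⟩
  have hKp : 0 ≤ K ^ p := Real.rpow_nonneg hK p
  have h4p : (0:ℝ) ≤ 4 ^ p := Real.rpow_nonneg (by norm_num) p
  calc ∫ ω, |Y ω| ^ p ∂P ≤ ∫ ω, g ω ∂P :=
        integral_mono hint hgint hptw
    _ = 4 ^ p * (A ^ p + K ^ p * (∫ ω, dist x₀ (ω j) ^ p ∂P)
        + K ^ p * (∫ ω, dist x₀ (ω k) ^ p ∂P) + K ^ p * (∫ ω, dist x₀ (ω l) ^ p ∂P)) := by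
        rw [hg, integral_const_mul, integral_add, integral_add, integral_add,
          integral_const_mul, integral_const_mul, integral_const_mul, integral_const]
        · simp
        · exact integrable_const _
        · exact (hH3int j).const_mul _
        · exact (integrable_const _).add ((hH3int j).const_mul _)
        · exact (hH3int k).const_mul _
        · exact ((integrable_const _).add ((hH3int j).const_mul _)).add
            ((hH3int k).const_mul _)
        · exact (hH3int l).const_mul _
    _ ≤ 4 ^ p * (A ^ p + 3 * (K ^ p * M)) := by
        have hMj := hM j; have hMk := hM k; have hMl := hM l
        have h1 : K ^ p * (∫ ω, dist x₀ (ω j) ^ p ∂P) ≤ K ^ p * M :=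
          mul_le_mul_of_nonneg_left hMj hKp
        have h2 : K ^ p * (∫ ω, dist x₀ (ω k) ^ p ∂P) ≤ K ^ p * M :=
          mul_le_mul_of_nonneg_left hMk hKp
        have h3 : K ^ p * (∫ ω, dist x₀ (ω l) ^ p ∂P) ≤ K ^ p * M :=
          mul_le_mul_of_nonneg_left hMl hKp
        refine mul_le_mul_of_nonneg_left ?_ h4p
        linarith

lemma MYcheb {P : MeasureTheory.Measure (ℕ → E)} [IsProbabilityMeasure P]
    (x₀ : E) {δ : ℝ} (hδ : 0 < δ)
    (hH3int : ∀ n : ℕ, Integrable (fun ω : ℕ → E => dist x₀ (ω n) ^ (2 + δ)) P)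
    {M : ℝ} (hM : ∀ n : ℕ, ∫ ω : ℕ → E, dist x₀ (ω n) ^ (2 + δ) ∂P ≤ M)
    {Y : (ℕ → E) → ℝ} (hY : Measurable Y) {A K : ℝ} (hA : 0 ≤ A) (hK : 0 ≤ K)
    (j k l : ℕ)
    (hbd : ∀ ω, |Y ω| ≤ A + K * dist x₀ (ω j) + K * dist x₀ (ω k) + K * dist x₀ (ω l))
    {ε : ℝ} (hε : 0 < ε) (n : ℕ) (hn : 1 ≤ n) :
    P {ω | ε / 2 * Real.sqrt (n : ℝ) ≤ |Y ω|} ≤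
      ENNReal.ofReal ((4 ^ (2+δ) * (A ^ (2+δ) + 3 * (K ^ (2+δ) * M)) / (ε/2) ^ (2+δ) + 1)
        * (n : ℝ) ^ (-(1 + δ/2))) := by
  set p : ℝ := 2 + δ with hpdef
  have hp : 0 ≤ p := by simp [hpdef]; linarith
  set B : ℝ := 4 ^ p * (A ^ p + 3 * (K ^ p * M)) with hBdef
  obtain ⟨hint, hB⟩ := MYmoment_le x₀ hp hH3int hM hY hA hK j k l hbd
  have hn1 : (1:ℝ) ≤ (n:ℝ) := by exact_mod_cast hn
  have hn0 : (0:ℝ) ≤ (n:ℝ) := by linarith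
  have hsq : 0 < Real.sqrt (n:ℝ) := Real.sqrt_pos.mpr (by linarith)
  have hε2 : 0 < ε / 2 := by linarith
  have ha : 0 < ε / 2 * Real.sqrt (n:ℝ) := mul_pos hε2 hsq
  have hmark := MYmarkov_rpow P Y p hp hint hB ha
  refine hmark.trans (ENNReal.ofReal_le_ofReal ?_)
  have hap : (ε / 2 * Real.sqrt (n:ℝ)) ^ p = (ε/2) ^ p * (n:ℝ) ^ (1 + δ/2) := by
    rw [Real.mul_rpow hε2.le (Real.sqrt_nonneg _)]
    congr 1
    rw [Real.sqrt_eq_rpow, ← Real.rpow_mul hn0]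
    congr 1
    rw [hpdef]; ring
  have hnp : (0:ℝ) < (n:ℝ) ^ (1 + δ/2) := Real.rpow_pos_of_pos (by linarith) _
  have hεp : (0:ℝ) < (ε/2) ^ p := Real.rpow_pos_of_pos hε2 p
  have hneg : (n:ℝ) ^ (-(1 + δ/2)) = ((n:ℝ) ^ (1 + δ/2))⁻¹ :=
    Real.rpow_neg hn0 _
  rw [hap, hneg]
  have h1 : B / ((ε/2) ^ p * (n:ℝ) ^ (1 + δ/2))
      = (B / (ε/2) ^ p) * ((n:ℝ) ^ (1 + δ/2))⁻¹ := by
    field_simp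
  rw [h1]
  have h2 : (0:ℝ) ≤ ((n:ℝ) ^ (1 + δ/2))⁻¹ := inv_nonneg.mpr hnp.le
  have h3 : B / (ε/2) ^ p ≤ B / (ε/2) ^ p + 1 := by linarith
  exact mul_le_mul_of_nonneg_right h3 h2


/-- Chebyshev-type bounds for `χ(X_n) - χ(X_0)` and `χ(X_n) - χ(X_{n-1})`, and the
Borel--Cantelli summability of `P_μ(A_n)`. -/
theorem chebyshev_bounds_and_borel_cantelli
    {E : Type*} [MeasurableSpace E] [MetricSpace E] [CompleteSpace E]
    [SecondCountableTopology E] [BorelSpace E]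
    (π : Kernel E E) [IsMarkovKernel π] (γ c : ℝ) (hγ : γ ∈ Set.Ioo (0 : ℝ) 1) (hc : 0 < c)
    -- (H0): the Feller property
    (hH0 : ∀ f : E → ℝ, Continuous f → IsBounded (Set.range f) → Continuous (Pfun π f))
    -- (H1): `P` preserves `M_{1,1}`
    (hH1 : ∀ ν : MeasureTheory.Measure E, FiniteFirstMoment ν → FiniteFirstMoment (Pmeas π ν))
    -- (H2): spectral gap in the Wasserstein metric
    (hH2 : ∀ n : ℕ, 1 ≤ n → ∀ ν₁ ν₂ : MeasureTheory.Measure E, FiniteFirstMoment ν₁ →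
      FiniteFirstMoment ν₂ →
      wassDist ((Pmeas π)^[n] ν₁) ((Pmeas π)^[n] ν₂) ≤ c * γ ^ n * wassDist ν₁ ν₂)
    -- the chain: initial distribution `μ ∈ M_{1,1}` and its law `Pμ` on `E^ℕ`
    (μ : MeasureTheory.Measure E) (hμ : FiniteFirstMoment μ)
    (Pμ : MeasureTheory.Measure (ℕ → E)) (hPμ : IsMarkovChainLaw π μ Pμ)
    -- (H3): uniformly bounded moments of order `2 + δ`
    (x₀ : E) (δ : ℝ) (hδ : 0 < δ)
    (hH3int : ∀ n : ℕ, Integrable (fun ω : ℕ → E => dist x₀ (ω n) ^ (2 + δ)) Pμ)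
    (hH3 : ∃ M : ℝ, ∀ n : ℕ, ∫ ω : ℕ → E, dist x₀ (ω n) ^ (2 + δ) ∂Pμ ≤ M)
    -- the unique invariant measure `μ* ∈ M_{1,1}`
    (μstar : MeasureTheory.Measure E) (hμstar : FiniteFirstMoment μstar)
    (hinv : Pmeas π μstar = μstar)
    (huniq : ∀ ν : MeasureTheory.Measure E, IsProbabilityMeasure ν → Pmeas π ν = ν → ν = μstar)
    -- `ψ` is Lipschitz with `⟨ψ, μ*⟩ = 0`
    (ψ : E → ℝ) (Lψ : ℝ≥0) (hψ : LipschitzWith Lψ ψ) (hψ0 : ∫ x, ψ x ∂μstar = 0) :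
    ∀ ε : ℝ, 0 < ε →
      (∃ c' C : ℝ, 0 < c' ∧ 0 < C ∧ ∀ n : ℕ, 1 ≤ n →
        Pμ {ω : ℕ → E | ε / 2 * Real.sqrt (n : ℝ) ≤ |chiFun π ψ (ω n) - chiFun π ψ (ω 0)|} ≤
          ENNReal.ofReal (c' * (n : ℝ) ^ (-(1 + δ / 2))) ∧
        Pμ {ω : ℕ → E | ε / 2 * Real.sqrt (n : ℝ) ≤ |chiFun π ψ (ω n) - chiFun π ψ (ω (n - 1))|} ≤
          ENNReal.ofReal (C * (n : ℝ) ^ (-(1 + δ / 2)))) ∧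
      ∑' n : ℕ, Pμ
        ({ω : ℕ → E | ε / 2 * Real.sqrt ((n : ℝ) + 1) ≤
            |SFun π ψ (n + 1) ω - ∑ i ∈ Finset.Icc 1 (n + 1), ψ (ω i)|} ∪
         {ω : ℕ → E | ε / 2 * Real.sqrt ((n : ℝ) + 1) ≤
            |ZFun π ψ (n + 1) ω - ψ (ω (n + 1))|}) < ⊤ := by
  intro ε hε
  haveI : IsProbabilityMeasure Pμ := hPμ.prob
  obtain ⟨M, hM⟩ := hH3
  have hM0 : 0 ≤ M := le_trans (integral_nonneg fun ω =>
    Real.rpow_nonneg dist_nonneg _) (hM 0)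
  have hγ0 := hγ.1
  have hγ1 := hγ.2
  set K : ℝ := (Lψ : ℝ) with hKdef
  have hK0 : 0 ≤ K := Lψ.coe_nonneg
  have hKψ : MYlipR K ψ := fun x y => by
    simpa [Real.dist_eq] using (lipschitzWith_iff_dist_le_mul.mp hψ) x y
  set Kχ : ℝ := K * max c 1 * (1 - γ)⁻¹ with hKχdef
  have hKχ0 : 0 ≤ Kχ := mul_nonneg (mul_nonneg hK0
    (le_trans zero_le_one (le_max_right c 1))) (inv_nonneg.mpr (by linarith))
  have hχlip : MYlipR Kχ (chiFun π ψ) :=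
    MYchi_lip π hH1 hγ hc hH2 hμstar hinv hK0 hKψ hψ0
  have hχmeas : Measurable (chiFun π ψ) := (MYlipR.continuous hKχ0 hχlip).measurable
  have hψmeas : Measurable ψ := (MYlipR.continuous hK0 hKψ).measurable
  set K₀ : ℝ := Kχ + K with hK₀def
  have hK₀0 : 0 ≤ K₀ := add_nonneg hKχ0 hK0
  have hdistχ : ∀ (ω : ℕ → E) (a b : ℕ), |chiFun π ψ (ω a) - chiFun π ψ (ω b)|
      ≤ Kχ * dist x₀ (ω a) + Kχ * dist x₀ (ω b) := by
    intro ω a b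
    have h2 : dist (ω a) (ω b) ≤ dist x₀ (ω a) + dist x₀ (ω b) := by
      rw [dist_comm x₀ (ω a)]; exact dist_triangle _ _ _
    calc |chiFun π ψ (ω a) - chiFun π ψ (ω b)| ≤ Kχ * dist (ω a) (ω b) :=
          hχlip (ω a) (ω b)
      _ ≤ Kχ * (dist x₀ (ω a) + dist x₀ (ω b)) := mul_le_mul_of_nonneg_left h2 hKχ0
      _ = Kχ * dist x₀ (ω a) + Kχ * dist x₀ (ω b) := by ring
  have hψbd : ∀ z : E, |ψ z| ≤ |ψ x₀| + K * dist x₀ z := by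
    intro z
    have h1 : |ψ z - ψ x₀| ≤ K * dist x₀ z := by
      rw [dist_comm]; exact hKψ z x₀
    calc |ψ z| = |ψ x₀ + (ψ z - ψ x₀)| := by ring_nf
      _ ≤ |ψ x₀| + |ψ z - ψ x₀| := abs_add_le _ _
      _ ≤ |ψ x₀| + K * dist x₀ z := by linarith
  have hεp : (0:ℝ) < (ε/2) ^ (2+δ) := Real.rpow_pos_of_pos (by linarith) _
  have h4p : (0:ℝ) ≤ (4:ℝ) ^ (2+δ) := Real.rpow_nonneg (by norm_num) _
  constructor
  · -- the two Chebyshev bounds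
    set C₁ : ℝ := 4 ^ (2+δ) * ((0:ℝ) ^ (2+δ) + 3 * (Kχ ^ (2+δ) * M)) / (ε/2) ^ (2+δ) + 1
      with hC₁def
    have hC₁pos : 0 < C₁ := by
      have h1 : (0:ℝ) ≤ (0:ℝ) ^ (2+δ) := Real.rpow_nonneg le_rfl _
      have h2 : (0:ℝ) ≤ Kχ ^ (2+δ) := Real.rpow_nonneg hKχ0 _
      have h3 : (0:ℝ) ≤ 4 ^ (2+δ) * ((0:ℝ) ^ (2+δ) + 3 * (Kχ ^ (2+δ) * M)) / (ε/2) ^ (2+δ) :=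
        div_nonneg (mul_nonneg h4p (by positivity)) hεp.le
      rw [hC₁def]; linarith
    refine ⟨C₁, C₁, hC₁pos, hC₁pos, fun n hn => ⟨?_, ?_⟩⟩
    · have hYm : Measurable fun ω : ℕ → E => chiFun π ψ (ω n) - chiFun π ψ (ω 0) :=
        (hχmeas.comp (measurable_pi_apply n)).sub (hχmeas.comp (measurable_pi_apply 0))
      have hbd : ∀ ω : ℕ → E, |chiFun π ψ (ω n) - chiFun π ψ (ω 0)|
          ≤ 0 + Kχ * dist x₀ (ω n) + Kχ * dist x₀ (ω 0) + Kχ * dist x₀ (ω 0) := by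
        intro ω
        have h1 := hdistχ ω n 0
        have h2 : 0 ≤ Kχ * dist x₀ (ω 0) := mul_nonneg hKχ0 dist_nonneg
        linarith
      exact MYcheb x₀ hδ hH3int hM hYm le_rfl hKχ0 n 0 0 hbd hε n hn
    · have hYm : Measurable fun ω : ℕ → E => chiFun π ψ (ω n) - chiFun π ψ (ω (n-1)) :=
        (hχmeas.comp (measurable_pi_apply n)).sub (hχmeas.comp (measurable_pi_apply (n-1)))
      have hbd : ∀ ω : ℕ → E, |chiFun π ψ (ω n) - chiFun π ψ (ω (n-1))|
          ≤ 0 + Kχ * dist x₀ (ω n) + Kχ * dist x₀ (ω (n-1)) + Kχ * dist x₀ (ω (n-1)) := by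
        intro ω
        have h1 := hdistχ ω n (n-1)
        have h2 : 0 ≤ Kχ * dist x₀ (ω (n-1)) := mul_nonneg hKχ0 dist_nonneg
        linarith
      exact MYcheb x₀ hδ hH3int hM hYm le_rfl hKχ0 n (n-1) (n-1) hbd hε n hn
  · -- Borel--Cantelli summability
    set q : ℝ := 1 + δ/2 with hqdef
    set C₂ : ℝ := 4 ^ (2+δ) * (|ψ x₀| ^ (2+δ) + 3 * (K₀ ^ (2+δ) * M)) / (ε/2) ^ (2+δ) + 1
      with hC₂def
    set C₃ : ℝ := 4 ^ (2+δ) * ((0:ℝ) ^ (2+δ) + 3 * (K₀ ^ (2+δ) * M)) / (ε/2) ^ (2+δ) + 1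
      with hC₃def
    have hC₂0 : 0 ≤ C₂ := by
      have h2 : (0:ℝ) ≤ K₀ ^ (2+δ) := Real.rpow_nonneg hK₀0 _
      have h1 : (0:ℝ) ≤ |ψ x₀| ^ (2+δ) := Real.rpow_nonneg (abs_nonneg _) _
      have h3 : (0:ℝ) ≤ 4 ^ (2+δ) * (|ψ x₀| ^ (2+δ) + 3 * (K₀ ^ (2+δ) * M)) / (ε/2) ^ (2+δ) :=
        div_nonneg (mul_nonneg h4p (by positivity)) hεp.le
      rw [hC₂def]; linarith
    have hC₃0 : 0 ≤ C₃ := by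
      have h1 : (0:ℝ) ≤ (0:ℝ) ^ (2+δ) := Real.rpow_nonneg le_rfl _
      have h2 : (0:ℝ) ≤ K₀ ^ (2+δ) := Real.rpow_nonneg hK₀0 _
      have h3 : (0:ℝ) ≤ 4 ^ (2+δ) * ((0:ℝ) ^ (2+δ) + 3 * (K₀ ^ (2+δ) * M)) / (ε/2) ^ (2+δ) :=
        div_nonneg (mul_nonneg h4p (by positivity)) hεp.le
      rw [hC₃def]; linarith
    have key : ∀ n : ℕ,
        Pμ ({ω : ℕ → E | ε / 2 * Real.sqrt ((n : ℝ) + 1) ≤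
              |SFun π ψ (n + 1) ω - ∑ i ∈ Finset.Icc 1 (n + 1), ψ (ω i)|} ∪
           {ω : ℕ → E | ε / 2 * Real.sqrt ((n : ℝ) + 1) ≤
              |ZFun π ψ (n + 1) ω - ψ (ω (n + 1))|}) ≤
          ENNReal.ofReal ((C₂ + C₃) * ((n:ℝ) + 1) ^ (-q)) := by
      intro n
      have hcast : (((n+1 : ℕ)):ℝ) = (n:ℝ) + 1 := by push_cast; ring
      -- the S-part
      have hSid : ∀ ω : ℕ → E, SFun π ψ (n+1) ω - ∑ i ∈ Finset.Icc 1 (n+1), ψ (ω i)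
          = chiFun π ψ (ω (n+1)) - chiFun π ψ (ω 0) + ψ (ω 0) := by
        intro ω
        have hins : Finset.range (n+2) = insert 0 (Finset.Icc 1 (n+1)) := by
          ext i
          simp only [Finset.mem_range, Finset.mem_insert, Finset.mem_Icc]
          omega
        have hsum : ∑ i ∈ Finset.range (n+1+1), ψ (ω i)
            = ψ (ω 0) + ∑ i ∈ Finset.Icc 1 (n+1), ψ (ω i) := by
          rw [show n+1+1 = n+2 from rfl, hins, Finset.sum_insert (by simp)]
        show chiFun π ψ (ω (n+1)) - chiFun π ψ (ω 0)
            + ∑ i ∈ Finset.range (n+1+1), ψ (ω i)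
            - ∑ i ∈ Finset.Icc 1 (n+1), ψ (ω i)
            = chiFun π ψ (ω (n+1)) - chiFun π ψ (ω 0) + ψ (ω 0)
        rw [hsum]; ring
      have hZid : ∀ ω : ℕ → E, ZFun π ψ (n+1) ω - ψ (ω (n+1))
          = chiFun π ψ (ω (n+1)) - chiFun π ψ (ω n) := by
        intro ω
        show chiFun π ψ (ω (n+1)) - chiFun π ψ (ω (n+1-1)) + ψ (ω (n+1))
            - ψ (ω (n+1)) = _
        simp
      have hYSm : Measurable fun ω : ℕ → E =>
          chiFun π ψ (ω (n+1)) - chiFun π ψ (ω 0) + ψ (ω 0) :=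
        ((hχmeas.comp (measurable_pi_apply (n+1))).sub
          (hχmeas.comp (measurable_pi_apply 0))).add (hψmeas.comp (measurable_pi_apply 0))
      have hYZm : Measurable fun ω : ℕ → E =>
          chiFun π ψ (ω (n+1)) - chiFun π ψ (ω n) :=
        (hχmeas.comp (measurable_pi_apply (n+1))).sub (hχmeas.comp (measurable_pi_apply n))
      have hbdS : ∀ ω : ℕ → E, |chiFun π ψ (ω (n+1)) - chiFun π ψ (ω 0) + ψ (ω 0)|
          ≤ |ψ x₀| + K₀ * dist x₀ (ω (n+1)) + K₀ * dist x₀ (ω 0) + K₀ * dist x₀ (ω 0) := by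
        intro ω
        have h1 := hdistχ ω (n+1) 0
        have h2 := hψbd (ω 0)
        have h3 := abs_add_le (chiFun π ψ (ω (n+1)) - chiFun π ψ (ω 0)) (ψ (ω 0))
        have e1 : K₀ * dist x₀ (ω (n+1)) = Kχ * dist x₀ (ω (n+1)) + K * dist x₀ (ω (n+1)) := by
          rw [hK₀def]; ring
        have e2 : K₀ * dist x₀ (ω 0) = Kχ * dist x₀ (ω 0) + K * dist x₀ (ω 0) := by
          rw [hK₀def]; ring
        have n1 : 0 ≤ K * dist x₀ (ω (n+1)) := mul_nonneg hK0 dist_nonneg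
        have n2 : 0 ≤ Kχ * dist x₀ (ω 0) := mul_nonneg hKχ0 dist_nonneg
        have n3 : 0 ≤ K * dist x₀ (ω 0) := mul_nonneg hK0 dist_nonneg
        linarith
      have hbdZ : ∀ ω : ℕ → E, |chiFun π ψ (ω (n+1)) - chiFun π ψ (ω n)|
          ≤ 0 + K₀ * dist x₀ (ω (n+1)) + K₀ * dist x₀ (ω n) + K₀ * dist x₀ (ω n) := by
        intro ω
        have h1 := hdistχ ω (n+1) n
        have e1 : K₀ * dist x₀ (ω (n+1)) = Kχ * dist x₀ (ω (n+1)) + K * dist x₀ (ω (n+1)) := by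
          rw [hK₀def]; ring
        have e2 : K₀ * dist x₀ (ω n) = Kχ * dist x₀ (ω n) + K * dist x₀ (ω n) := by
          rw [hK₀def]; ring
        have n1 : 0 ≤ K * dist x₀ (ω (n+1)) := mul_nonneg hK0 dist_nonneg
        have n2 : 0 ≤ Kχ * dist x₀ (ω n) := mul_nonneg hKχ0 dist_nonneg
        have n3 : 0 ≤ K * dist x₀ (ω n) := mul_nonneg hK0 dist_nonneg
        linarith
      have hS : Pμ {ω : ℕ → E | ε / 2 * Real.sqrt ((n : ℝ) + 1) ≤
            |SFun π ψ (n + 1) ω - ∑ i ∈ Finset.Icc 1 (n + 1), ψ (ω i)|}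
          ≤ ENNReal.ofReal (C₂ * ((n:ℝ) + 1) ^ (-q)) := by
        have hch := MYcheb x₀ hδ hH3int hM hYSm (abs_nonneg (ψ x₀)) hK₀0
          (n+1) 0 0 hbdS hε (n+1) (Nat.le_add_left 1 n)
        rw [hcast] at hch
        have hsets : {ω : ℕ → E | ε / 2 * Real.sqrt ((n : ℝ) + 1) ≤
              |SFun π ψ (n + 1) ω - ∑ i ∈ Finset.Icc 1 (n + 1), ψ (ω i)|}
            = {ω : ℕ → E | ε / 2 * Real.sqrt ((n : ℝ) + 1) ≤
              |chiFun π ψ (ω (n+1)) - chiFun π ψ (ω 0) + ψ (ω 0)|} := by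
          ext ω
          simp only [Set.mem_setOf_eq]
          rw [hSid ω]
        rw [hsets]
        exact hch
      have hZ : Pμ {ω : ℕ → E | ε / 2 * Real.sqrt ((n : ℝ) + 1) ≤
            |ZFun π ψ (n + 1) ω - ψ (ω (n + 1))|}
          ≤ ENNReal.ofReal (C₃ * ((n:ℝ) + 1) ^ (-q)) := by
        have hch := MYcheb x₀ hδ hH3int hM hYZm le_rfl hK₀0
          (n+1) n n hbdZ hε (n+1) (Nat.le_add_left 1 n)
        rw [hcast] at hch
        have hsets : {ω : ℕ → E | ε / 2 * Real.sqrt ((n : ℝ) + 1) ≤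
              |ZFun π ψ (n + 1) ω - ψ (ω (n + 1))|}
            = {ω : ℕ → E | ε / 2 * Real.sqrt ((n : ℝ) + 1) ≤
              |chiFun π ψ (ω (n+1)) - chiFun π ψ (ω n)|} := by
          ext ω
          simp only [Set.mem_setOf_eq]
          rw [hZid ω]
        rw [hsets]
        exact hch
      have ht0 : (0:ℝ) ≤ ((n:ℝ) + 1) ^ (-q) :=
        Real.rpow_nonneg (by positivity) _
      calc Pμ _ ≤ Pμ {ω : ℕ → E | ε / 2 * Real.sqrt ((n : ℝ) + 1) ≤
              |SFun π ψ (n + 1) ω - ∑ i ∈ Finset.Icc 1 (n + 1), ψ (ω i)|}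
            + Pμ {ω : ℕ → E | ε / 2 * Real.sqrt ((n : ℝ) + 1) ≤
              |ZFun π ψ (n + 1) ω - ψ (ω (n + 1))|} := measure_union_le _ _
        _ ≤ ENNReal.ofReal (C₂ * ((n:ℝ) + 1) ^ (-q))
            + ENNReal.ofReal (C₃ * ((n:ℝ) + 1) ^ (-q)) := add_le_add hS hZ
        _ = ENNReal.ofReal (C₂ * ((n:ℝ) + 1) ^ (-q) + C₃ * ((n:ℝ) + 1) ^ (-q)) :=
            (ENNReal.ofReal_add (mul_nonneg hC₂0 ht0) (mul_nonneg hC₃0 ht0)).symm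
        _ = ENNReal.ofReal ((C₂ + C₃) * ((n:ℝ) + 1) ^ (-q)) := by
            congr 1; ring
    have hnn : ∀ n : ℕ, 0 ≤ (C₂ + C₃) * ((n:ℝ) + 1) ^ (-q) := fun n =>
      mul_nonneg (add_nonneg hC₂0 hC₃0) (Real.rpow_nonneg (by positivity) _)
    have hsumm : Summable (fun n : ℕ => (C₂ + C₃) * ((n:ℝ) + 1) ^ (-q)) := by
      apply Summable.mul_left
      have h : Summable (fun n : ℕ => (n:ℝ) ^ (-q)) :=
        Real.summable_nat_rpow.mpr (by rw [hqdef]; linarith)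
      have h2 : Summable (fun n : ℕ => ((n+1 : ℕ):ℝ) ^ (-q)) :=
        (_root_.summable_nat_add_iff 1).mpr h
      refine h2.congr fun n => ?_
      push_cast
      ring_nf
    calc ∑' n : ℕ, Pμ
          ({ω : ℕ → E | ε / 2 * Real.sqrt ((n : ℝ) + 1) ≤
              |SFun π ψ (n + 1) ω - ∑ i ∈ Finset.Icc 1 (n + 1), ψ (ω i)|} ∪
           {ω : ℕ → E | ε / 2 * Real.sqrt ((n : ℝ) + 1) ≤
              |ZFun π ψ (n + 1) ω - ψ (ω (n + 1))|})
        ≤ ∑' n : ℕ, ENNReal.ofReal ((C₂ + C₃) * ((n:ℝ) + 1) ^ (-q)) :=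
          ENNReal.tsum_le_tsum key
      _ = ENNReal.ofReal (∑' n : ℕ, (C₂ + C₃) * ((n:ℝ) + 1) ^ (-q)) :=
          (ENNReal.ofReal_tsum_of_nonneg hnn hsumm).symm
      _ < ⊤ := ENNReal.ofReal_lt_top
end
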